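/- arXiv:1009.2389 — 3 statements merged into one kernel-verified Lean document; each statement's English description precedes it below -/
import Mathlib

section
/- Let (A, φ) be a noncommutative probability space and let D : A → A be a derivation, i.e. a linear map with D(ab) = D(a)b + aD(b) for all a, b ∈ A. Set φ^{(i)} := φ ∘ D^i for 0 ≤ i ≤ k, so that (A, (φ^{(i)})_{0≤i≤k}) is an infinitesimal noncommutative probability space of order k; let (κ_n^{(i)}) be its infinitesimal non-crossing cumulant functionals and let (κ_n) be the free cumulant functionals of (A, φ). Then for every n ≥ 1, every 0 ≤ i ≤ k and all a_1, ..., a_n ∈ A: κ_n^{(i)}(a_1, ..., a_n) = Σ_{λ ∈ Λ_{n,i}} (i!/(λ_1!···λ_n!)) κ_n(D^{λ_1}(a_1), ..., D^{λ_n}(a_n)). -/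
open scoped BigOperators
attribute [local instance] Classical.propDecidable

/-- A (set) partition of a type `X`: nonempty blocks, every point in a unique block. -/
def IsPartition {X : Type*} (P : Finset (Finset X)) : Prop :=
  (∀ B ∈ P, B.Nonempty) ∧ ∀ x : X, ∃! B, B ∈ P ∧ x ∈ B

/-- Non-crossing collection of blocks in a linear order. -/
def IsNonCrossing {X : Type*} [LinearOrder X] (P : Finset (Finset X)) : Prop :=
  ∀ a b c d : X, a < b → b < c → c < d →
    (∃ B ∈ P, a ∈ B ∧ c ∈ B) → (∃ B ∈ P, b ∈ B ∧ d ∈ B) →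
    ∃ B ∈ P, a ∈ B ∧ b ∈ B

/-- The finset `NC(n)` of non-crossing partitions of `[n]` (modelled on `Fin n`). -/
noncomputable def ncFinset (n : ℕ) : Finset (Finset (Finset (Fin n))) :=
  Finset.univ.filter fun P => IsPartition P ∧ IsNonCrossing P

/-- The subtuple `(a_1,…,a_n)|V` of the entries indexed by `V`, in increasing order. -/
noncomputable def restrictTuple {A : Type*} {n : ℕ} (a : Fin n → A) (V : Finset (Fin n)) :
    Fin V.card → A :=
  fun i => a (V.orderIsoOfFin rfl i).1

section Reindex
variable {n : ℕ}

lemma prod_block_reindex {M : Type*} [CommMonoid M] (V : Finset (Fin n)) (F : ↥V → M) :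
    ∏ t : Fin V.card, F (V.orderIsoOfFin rfl t) = ∏ x ∈ V.attach, F x := by
  rw [← Finset.univ_eq_attach, ← Equiv.prod_comp (V.orderIsoOfFin rfl).toEquiv F]
  rfl

lemma sum_block_reindex {M : Type*} [AddCommMonoid M] (V : Finset (Fin n)) (F : ↥V → M) :
    ∑ t : Fin V.card, F (V.orderIsoOfFin rfl t) = ∑ x ∈ V.attach, F x := by
  rw [← Finset.univ_eq_attach, ← Equiv.sum_comp (V.orderIsoOfFin rfl).toEquiv F]
  rfl

lemma partition_cover {p : Finset (Finset (Fin n))} (hp : IsPartition p) :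
    p.biUnion id = Finset.univ := by
  ext x
  simp only [Finset.mem_biUnion, id, Finset.mem_univ, iff_true]
  obtain ⟨V, hV⟩ := (hp.2 x).exists
  exact ⟨V, hV.1, hV.2⟩

lemma partition_disjoint {p : Finset (Finset (Fin n))} (hp : IsPartition p) :
    (p : Set (Finset (Fin n))).PairwiseDisjoint id := by
  intro V hV W hW hVW
  simp only [Finset.coe_mem, Finset.mem_coe] at hV hW
  simp only [Function.onFun, id]
  rw [Finset.disjoint_left]
  intro x hxV hxW
  exact hVW ((hp.2 x).unique ⟨hV, hxV⟩ ⟨hW, hxW⟩)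

lemma prod_partition {M : Type*} [CommMonoid M] {p : Finset (Finset (Fin n))}
    (hp : IsPartition p) (h : Fin n → M) :
    ∏ x, h x = ∏ V ∈ p, ∏ j ∈ V, h j := by
  rw [← partition_cover hp, Finset.prod_biUnion (partition_disjoint hp)]
  rfl

lemma sum_partition {M : Type*} [AddCommMonoid M] {p : Finset (Finset (Fin n))}
    (hp : IsPartition p) (h : Fin n → M) :
    ∑ x, h x = ∑ V ∈ p, ∑ j ∈ V, h j := by
  rw [← partition_cover hp, Finset.sum_biUnion (partition_disjoint hp)]
  rfl

noncomputable def blockOf {p : Finset (Finset (Fin n))} (hp : IsPartition p) (x : Fin n) :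
    Finset (Fin n) :=
  ((hp.2 x).exists).choose

lemma blockOf_mem {p : Finset (Finset (Fin n))} (hp : IsPartition p) (x : Fin n) :
    blockOf hp x ∈ p ∧ x ∈ blockOf hp x :=
  ((hp.2 x).exists).choose_spec

lemma blockOf_unique {p : Finset (Finset (Fin n))} (hp : IsPartition p) {x : Fin n}
    {V : Finset (Fin n)} (hV : V ∈ p) (hx : x ∈ V) : blockOf hp x = V :=
  (hp.2 x).unique (blockOf_mem hp x) ⟨hV, hx⟩

lemma apply_congr {γ : Type*} {I : Type*} {d : I → ℕ} (g : ∀ i, Fin (d i) → γ) {ii jj : I}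
    (h : ii = jj) {t : Fin (d ii)} {t' : Fin (d jj)} (ht : (t : ℕ) = (t' : ℕ)) :
    g ii t = g jj t' := by
  subst h
  rw [Fin.ext ht]

lemma restrict_univ {α : Type*} (a : Fin n → α)
    (h : (Finset.univ : Finset (Fin n)).card = n) :
    restrictTuple a Finset.univ = fun t => a (Fin.cast h t) := by
  funext t
  unfold restrictTuple
  congr 1
  have h1 : StrictMono (fun t : Fin (Finset.univ : Finset (Fin n)).card =>
      ((Finset.univ.orderIsoOfFin rfl t : Fin n))) := by
    intro s t hst
    simpa using (Finset.univ.orderIsoOfFin (rfl)).strictMono hst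
  have h2 : StrictMono (Fin.cast h) := fun s t hst => hst
  have hr : Set.range (fun t : Fin (Finset.univ : Finset (Fin n)).card =>
      ((Finset.univ.orderIsoOfFin rfl t : Fin n))) = Set.range (Fin.cast h) := by
    have hl : Set.range (fun t : Fin (Finset.univ : Finset (Fin n)).card =>
        ((Finset.univ.orderIsoOfFin rfl t : Fin n))) = Set.univ := by
      have := Finset.range_orderEmbOfFin (Finset.univ : Finset (Fin n)) (rfl)
      simp only [Finset.coe_univ] at this
      rw [← this]
      rfl
    have hrr : Set.range (Fin.cast h) = Set.univ :=
      Set.range_eq_univ.2 (finCongr h).surjective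
    rw [hl, hrr]
  haveI : WellFoundedLT (Fin (Finset.univ : Finset (Fin n)).card) :=
    inferInstance
  have := h1.range_inj h2
  exact congrFun (this.1 hr) t

lemma eval_congr {α β : Type*} {n : ℕ} (F : (m : ℕ) → (Fin m → α) → β) (a : Fin n → α)
    {V W : Finset (Fin n)} (h : V = W) :
    F V.card (restrictTuple a V) = F W.card (restrictTuple a W) := by
  subst h; rfl

lemma cast_eval {α : Type*} {β : Type*} (F : (m : ℕ) → (Fin m → α) → β) {m n : ℕ}
    (h : m = n) (w : Fin n → α) : F m (fun t => w (Fin.cast h t)) = F n w := by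
  subst h; rfl

end Reindex

section Full
variable {n : ℕ}

lemma full_mem_ncFinset (hn : 1 ≤ n) :
    ({Finset.univ} : Finset (Finset (Fin n))) ∈ ncFinset n := by
  rw [ncFinset, Finset.mem_filter]
  refine ⟨Finset.mem_univ _, ⟨?_, ?_⟩, ?_⟩
  · intro B hB
    rw [Finset.mem_singleton] at hB
    subst hB
    have : Nonempty (Fin n) := ⟨⟨0, hn⟩⟩
    exact Finset.univ_nonempty
  · intro x
    refine ⟨Finset.univ, ⟨Finset.mem_singleton_self _, Finset.mem_univ _⟩, ?_⟩
    rintro B ⟨hB, -⟩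
    rwa [Finset.mem_singleton] at hB
  · intro a b c d _ _ _ _ _
    exact ⟨Finset.univ, Finset.mem_singleton_self _, Finset.mem_univ _, Finset.mem_univ _⟩

lemma mem_ncFinset_isPartition {p : Finset (Finset (Fin n))} (hp : p ∈ ncFinset n) :
    IsPartition p := by
  rw [ncFinset, Finset.mem_filter] at hp
  exact hp.2.1

lemma block_card_lt {p : Finset (Finset (Fin n))} (hp : IsPartition p)
    (hne : p ≠ {Finset.univ}) {V : Finset (Fin n)} (hV : V ∈ p) : V.card < n := by
  have hle : V.card ≤ n := by
    simpa using Finset.card_le_card (Finset.subset_univ V)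
  rcases lt_or_eq_of_le hle with h | h
  · exact h
  · exfalso
    have hVuniv : V = Finset.univ := by
      apply Finset.eq_univ_of_card
      simpa using h
    subst hVuniv
    apply hne
    apply Finset.eq_singleton_iff_unique_mem.2
    refine ⟨hV, fun W hW => ?_⟩
    obtain ⟨x, hx⟩ := hp.1 W hW
    have := (hp.2 x).unique ⟨hW, hx⟩ ⟨hV, Finset.mem_univ x⟩
    exact this

lemma block_card_pos {p : Finset (Finset (Fin n))} (hp : IsPartition p)
    {V : Finset (Fin n)} (hV : V ∈ p) : 1 ≤ V.card :=
  Finset.card_pos.2 (hp.1 V hV)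

lemma mult_cast {m i : ℕ} (lam : Fin m → ℕ) (hlam : ∑ j, lam j = i) :
    (Nat.multinomial Finset.univ lam : ℂ) =
      (i.factorial : ℂ) / ∏ j, ((lam j).factorial : ℂ) := by
  have hspec := Nat.multinomial_spec Finset.univ lam
  rw [hlam] at hspec
  have hne : (∏ j, ((lam j).factorial : ℂ)) ≠ 0 := by
    apply Finset.prod_ne_zero_iff.2
    intro j _
    exact_mod_cast (Nat.factorial_ne_zero _)
  rw [eq_div_iff hne, mul_comm]
  exact_mod_cast congrArg (Nat.cast : ℕ → ℂ) hspec

end Full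


section Deriv
variable {A : Type*} [Ring A] [Algebra ℂ A] {D : A →ₗ[ℂ] A}

lemma D_one (hD : ∀ a b : A, D (a * b) = D a * b + a * D b) : D 1 = 0 := by
  have := hD 1 1; simpa using this

lemma hpowD (m : ℕ) (z : A) : (D ^ (m+1)) z = D ((D ^ m) z) := by
  rw [pow_succ']; rfl

lemma pow_leibniz (hD : ∀ a b : A, D (a * b) = D a * b + a * D b) (i : ℕ) (x y : A) :
    (D ^ i) (x * y) =
      ∑ p ∈ Finset.HasAntidiagonal.antidiagonal i, (i.choose p.1) • ((D ^ p.1) x * (D ^ p.2) y) := by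
  induction i with
  | zero => simp
  | succ i ih =>
    rw [hpowD, ih, map_sum]
    have hterm : ∀ p : ℕ × ℕ, D ((i.choose p.1) • ((D ^ p.1) x * (D ^ p.2) y))
        = (i.choose p.1) • ((D ^ (p.1+1)) x * (D ^ p.2) y)
          + (i.choose p.1) • ((D ^ p.1) x * (D ^ (p.2+1)) y) := by
      intro p
      rw [map_nsmul, hD, smul_add, hpowD, hpowD]
    simp_rw [hterm, Finset.sum_add_distrib]
    have h2 := Finset.Nat.sum_antidiagonal_succ' (n := i)
      (f := fun p => (i.choose p.1) • ((D ^ p.1) x * (D ^ p.2) y))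
    have h1 := Finset.Nat.sum_antidiagonal_succ (n := i)
      (f := fun p => (i.choose p.1) • ((D ^ p.1) x * (D ^ p.2) y))
    have h3 := Finset.Nat.sum_antidiagonal_succ (n := i)
      (f := fun p => ((i+1).choose p.1) • ((D ^ p.1) x * (D ^ p.2) y))
    simp only [Nat.choose_succ_self, zero_smul, zero_add] at h2
    rw [h3]
    rw [← h2, h1]
    simp only [Nat.choose_zero_right, Nat.choose_succ_succ, add_smul, Finset.sum_add_distrib]
    abel
end Deriv

lemma multinomial_map {α β : Type*} (s : Finset α) (e : α ↪ β) (f : β → ℕ) :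
    Nat.multinomial (s.map e) f = Nat.multinomial s (f ∘ e) := by
  simp [Nat.multinomial, Finset.sum_map, Finset.prod_map]

lemma multinomial_univ_cons {n : ℕ} (j : ℕ) (μ : Fin n → ℕ) :
    Nat.multinomial Finset.univ (Fin.cons j μ) =
      (j + ∑ t, μ t).choose j * Nat.multinomial Finset.univ μ := by
  classical
  rw [Fin.univ_succ, Nat.multinomial_cons, Fin.cons_zero]
  congr 1
  · congr 1
    rw [Finset.sum_map]
    simp
  · rw [multinomial_map]
    congr 1

section Deriv2
variable {A : Type*} [Ring A] [Algebra ℂ A] {D : A →ₗ[ℂ] A}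

lemma pow_one_eq_zero (hD : ∀ a b : A, D (a * b) = D a * b + a * D b) (i : ℕ) :
    (D ^ (i+1)) (1 : A) = 0 := by
  rw [pow_succ]
  show (D ^ i) (D 1) = 0
  rw [D_one hD, map_zero]

lemma leibniz_tuple (hD : ∀ a b : A, D (a * b) = D a * b + a * D b) :
    ∀ (n : ℕ) (a : Fin n → A) (i : ℕ),
    (D ^ i) (List.ofFn a).prod = ∑ lam ∈ Finset.Nat.antidiagonalTuple n i,
      (Nat.multinomial Finset.univ lam) • (List.ofFn fun j => (D ^ (lam j)) (a j)).prod := by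
  intro n
  induction n with
  | zero =>
    intro a i
    match i with
    | 0 => simp [Finset.Nat.antidiagonalTuple_zero_zero]
    | (i+1) => simp [pow_one_eq_zero hD, Finset.Nat.antidiagonalTuple_zero_succ]
  | succ n ih =>
    intro a i
    have hsplit : (List.ofFn a).prod = a 0 * (List.ofFn fun s : Fin n => a s.succ).prod := by
      rw [List.ofFn_succ, List.prod_cons]
    rw [hsplit, pow_leibniz hD]
    have hterm : ∀ p : ℕ × ℕ,
        (i.choose p.1) • ((D ^ p.1) (a 0) * (D ^ p.2) (List.ofFn fun s : Fin n => a s.succ).prod)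
        = ∑ μ ∈ Finset.Nat.antidiagonalTuple n p.2,
            ((i.choose p.1) * Nat.multinomial Finset.univ μ) •
              ((D ^ p.1) (a 0) * (List.ofFn fun s : Fin n => (D ^ (μ s)) (a s.succ)).prod) := by
      intro p
      rw [ih, Finset.mul_sum, Finset.smul_sum]
      refine Finset.sum_congr rfl fun μ _ => ?_
      rw [mul_smul_comm, smul_smul]
    rw [Finset.sum_congr rfl fun p _ => hterm p, Finset.sum_sigma']
    refine Finset.sum_nbij' (i := fun s => Fin.cons s.1.1 s.2)
      (j := fun lam => ⟨(lam 0, ∑ s : Fin n, lam s.succ), Fin.tail lam⟩) ?_ ?_ ?_ ?_ ?_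
    · rintro ⟨⟨j, l⟩, μ⟩ hs
      simp only [Finset.mem_sigma, Finset.mem_antidiagonal,
        Finset.Nat.mem_antidiagonalTuple] at hs ⊢
      rw [Fin.sum_cons]
      rw [hs.2]
      simpa using hs.1
    · intro lam hlam
      simp only [Finset.mem_sigma, Finset.mem_antidiagonal,
        Finset.Nat.mem_antidiagonalTuple] at hlam ⊢
      refine ⟨?_, rfl⟩
      rw [← hlam, Fin.sum_univ_succ]
      exact Finset.HasAntidiagonal.mem_antidiagonal.2 rfl
    · rintro ⟨⟨j, l⟩, μ⟩ hs
      simp only [Finset.mem_sigma, Finset.mem_antidiagonal,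
        Finset.Nat.mem_antidiagonalTuple] at hs
      refine Sigma.ext ?_ ?_
      · rw [Prod.ext_iff]
        refine ⟨rfl, ?_⟩
        simp only [Fin.cons_succ, Fin.cons_zero]
        exact hs.2
      · simp only [Fin.cons_zero]
        rw [Fin.tail_cons]
    · intro lam _
      exact Fin.cons_self_tail lam
    · rintro ⟨⟨j, l⟩, μ⟩ hs
      simp only [Finset.mem_sigma, Finset.mem_antidiagonal,
        Finset.Nat.mem_antidiagonalTuple] at hs
      rw [multinomial_univ_cons, hs.2]
      have hji : j + l = i := by simpa using hs.1
      rw [hji, List.ofFn_succ, List.prod_cons]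
      simp only [Fin.cons_zero, Fin.cons_succ]

end Deriv2

noncomputable def cand {A : Type*} [Ring A] [Algebra ℂ A] (D : A →ₗ[ℂ] A)
    (κ : (m : ℕ) → MultilinearMap ℂ (fun _ : Fin m => A) ℂ) (i m : ℕ) (v : Fin m → A) : ℂ :=
  ∑ lam ∈ Finset.Nat.antidiagonalTuple m i,
    ((i.factorial : ℂ) / ∏ j, ((lam j).factorial : ℂ)) * κ m (fun j => (D ^ (lam j)) (v j))

section Key
variable {A : Type*} [Ring A] [Algebra ℂ A] (D : A →ₗ[ℂ] A)
  (κ : (m : ℕ) → MultilinearMap ℂ (fun _ : Fin m => A) ℂ)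

lemma per_partition {n : ℕ} {p : Finset (Finset (Fin n))} (hp : IsPartition p)
    (i : ℕ) (a : Fin n → A) :
    ∑ f ∈ ((Fintype.piFinset fun _ : {V // V ∈ p} => Finset.range (i + 1)) |>.filter
        (fun f => ∑ V, f V = i)),
      ((i.factorial : ℂ) / ∏ V, ((f V).factorial : ℂ)) *
        ∏ V : {V // V ∈ p}, cand D κ (f V) V.1.card (restrictTuple a V.1)
    = ∑ lam ∈ Finset.Nat.antidiagonalTuple n i,
        ((i.factorial : ℂ) / ∏ j, ((lam j).factorial : ℂ)) *
          ∏ V ∈ p, κ V.card (restrictTuple (fun j => (D ^ (lam j)) (a j)) V) := by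
  classical
  -- step 1: expand the product of sums
  have step1 : ∀ f : {V // V ∈ p} → ℕ,
      (∏ V : {V // V ∈ p}, cand D κ (f V) V.1.card (restrictTuple a V.1))
      = ∑ g ∈ Fintype.piFinset
          (fun V : {V // V ∈ p} => Finset.Nat.antidiagonalTuple V.1.card (f V)),
          ∏ V : {V // V ∈ p},
            (((f V).factorial : ℂ) / ∏ t, ((g V t).factorial : ℂ)) *
              κ V.1.card (fun t => (D ^ (g V t)) (restrictTuple a V.1 t)) := by
    intro f
    unfold cand
    rw [Finset.prod_univ_sum]
  simp_rw [step1, Finset.mul_sum, Finset.sum_sigma']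
  -- the key pointwise identity
  set e : (V : Finset (Fin n)) → Fin V.card ≃o ↥V := fun V => V.orderIsoOfFin rfl with he
  set Φ : (Σ _f : {V // V ∈ p} → ℕ, ∀ V : {V // V ∈ p}, Fin V.1.card → ℕ) → (Fin n → ℕ) :=
    fun s => fun j => s.2 ⟨blockOf hp j, (blockOf_mem hp j).1⟩
      ((e (blockOf hp j)).symm ⟨j, (blockOf_mem hp j).2⟩) with hΦ
  have K : ∀ (g : ∀ V : {V // V ∈ p}, Fin V.1.card → ℕ) (V : {V // V ∈ p})
      (t : Fin V.1.card),
      Φ ⟨fun V => 0, g⟩ ((e V.1 t : Fin n)) = g V t := by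
    intro g V t
    set x : Fin n := (e V.1 t : Fin n) with hx
    have hxV : x ∈ V.1 := (e V.1 t).2
    have hbV : blockOf hp x = V.1 := blockOf_unique hp V.2 hxV
    have hsub : (⟨blockOf hp x, (blockOf_mem hp x).1⟩ : {V // V ∈ p}) = V := Subtype.ext hbV
    have hval : ((((e (blockOf hp x)).symm ⟨x, (blockOf_mem hp x).2⟩) : Fin _) : ℕ)
        = (((e V.1).symm ⟨x, hxV⟩ : Fin _) : ℕ) := by
      rw [he]
      rw [Finset.orderIsoOfFin_symm_apply, Finset.orderIsoOfFin_symm_apply]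
      simp only [hbV]
    have := apply_congr (d := fun V : {V // V ∈ p} => V.1.card) g hsub hval
    rw [hΦ]
    simp only
    rw [this]
    congr 1
    have : (⟨x, hxV⟩ : ↥V.1) = e V.1 t := rfl
    rw [this, OrderIso.symm_apply_apply]
  -- general reindexing facts
  have hsumV : ∀ (h : Fin n → ℕ) (V : {V // V ∈ p}),
      ∑ t : Fin V.1.card, h (e V.1 t : Fin n) = ∑ j ∈ V.1, h j := by
    intro h V
    rw [he]
    rw [sum_block_reindex V.1 (fun x => h x.1)]
    exact Finset.sum_attach _ _
  have hprodV : ∀ (h : Fin n → ℂ) (V : {V // V ∈ p}),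
      ∏ t : Fin V.1.card, h (e V.1 t : Fin n) = ∏ j ∈ V.1, h j := by
    intro h V
    rw [he]
    rw [prod_block_reindex V.1 (fun x => h x.1)]
    exact Finset.prod_attach _ _
  have hsumP : ∀ (h : Fin n → ℕ), ∑ j, h j = ∑ V : {V // V ∈ p}, ∑ j ∈ V.1, h j := by
    intro h
    rw [sum_partition hp h, ← Finset.sum_attach p (fun V => ∑ j ∈ V, h j),
      Finset.univ_eq_attach]
  have hprodP : ∀ (h : Fin n → ℂ), ∏ j, h j = ∏ V : {V // V ∈ p}, ∏ j ∈ V.1, h j := by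
    intro h
    rw [prod_partition hp h, ← Finset.prod_attach p (fun V => ∏ j ∈ V, h j),
      Finset.univ_eq_attach]
  -- the inverse map
  set Ψ : (Fin n → ℕ) → (Σ _f : {V // V ∈ p} → ℕ, ∀ V : {V // V ∈ p}, Fin V.1.card → ℕ) :=
    fun lam => ⟨fun V => ∑ j ∈ V.1, lam j, fun V t => lam (e V.1 t : Fin n)⟩ with hΨ
  -- sum of Φ s over a block
  have hblocksum : ∀ (f : {V // V ∈ p} → ℕ) (g : ∀ V : {V // V ∈ p}, Fin V.1.card → ℕ)
      (V : {V // V ∈ p}), ∑ j ∈ V.1, Φ ⟨f, g⟩ j = ∑ t : Fin V.1.card, g V t := by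
    intro f g V
    rw [← hsumV (fun j => Φ ⟨f, g⟩ j) V]
    exact Finset.sum_congr rfl fun t _ => K g V t
  refine Finset.sum_nbij' Φ Ψ ?_ ?_ ?_ ?_ ?_
  · rintro ⟨f, g⟩ hs
    simp only [Finset.mem_sigma, Finset.mem_filter, Fintype.mem_piFinset] at hs
    rw [Finset.Nat.mem_antidiagonalTuple, hsumP]
    have : ∀ V : {V // V ∈ p}, ∑ j ∈ V.1, Φ ⟨f, g⟩ j = f V := by
      intro V
      rw [hblocksum f g V]
      exact Finset.Nat.mem_antidiagonalTuple.1 (hs.2 V)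
    rw [Finset.sum_congr rfl fun V _ => this V]
    exact hs.1.2
  · intro lam hlam
    rw [Finset.Nat.mem_antidiagonalTuple] at hlam
    simp only [Finset.mem_sigma, Finset.mem_filter, Fintype.mem_piFinset]
    have hsum : ∑ V : {V // V ∈ p}, ∑ j ∈ V.1, lam j = i := by
      rw [← hsumP lam, hlam]
    refine ⟨⟨fun V => ?_, hsum⟩, fun V => ?_⟩
    · rw [Finset.mem_range, Nat.lt_succ_iff]
      calc ∑ j ∈ V.1, lam j ≤ ∑ V : {V // V ∈ p}, ∑ j ∈ V.1, lam j :=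
            Finset.single_le_sum (f := fun V : {V // V ∈ p} => ∑ j ∈ V.1, lam j)
              (fun _ _ => Nat.zero_le _) (Finset.mem_univ V)
        _ = i := hsum
    · rw [Finset.Nat.mem_antidiagonalTuple]
      exact hsumV lam V
  · rintro ⟨f, g⟩ hs
    simp only [Finset.mem_sigma, Finset.mem_filter, Fintype.mem_piFinset] at hs
    refine Sigma.ext ?_ (heq_of_eq ?_)
    · funext V
      show ∑ j ∈ V.1, Φ ⟨f, g⟩ j = f V
      rw [hblocksum f g V]
      exact Finset.Nat.mem_antidiagonalTuple.1 (hs.2 V)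
    · funext V t
      exact K g V t
  · intro lam _
    funext j
    show lam ((e (blockOf hp j)) ((e (blockOf hp j)).symm ⟨j, (blockOf_mem hp j).2⟩) : Fin n)
      = lam j
    rw [OrderIso.apply_symm_apply]
  · rintro ⟨f, g⟩ hs
    simp only [Finset.mem_sigma, Finset.mem_filter, Fintype.mem_piFinset] at hs
    -- identify the κ factors
    have hκfac : ∀ V : {V // V ∈ p},
        κ V.1.card (restrictTuple (fun j => (D ^ (Φ ⟨f, g⟩ j)) (a j)) V.1)
        = κ V.1.card (fun t => (D ^ (g V t)) (restrictTuple a V.1 t)) := by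
      intro V
      congr 1
      funext t
      show (D ^ (Φ ⟨f, g⟩ ((e V.1 t : Fin n)))) (a (e V.1 t : Fin n)) = _
      rw [K g V t]
      rfl
    have hκP : ∏ V ∈ p, κ V.card (restrictTuple (fun j => (D ^ (Φ ⟨f, g⟩ j)) (a j)) V)
        = ∏ V : {V // V ∈ p}, κ V.1.card (fun t => (D ^ (g V t)) (restrictTuple a V.1 t)) := by
      rw [← Finset.prod_attach p
        (fun V => κ V.card (restrictTuple (fun j => (D ^ (Φ ⟨f, g⟩ j)) (a j)) V)),
        Finset.univ_eq_attach]
      exact Finset.prod_congr rfl fun V _ => hκfac V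
    -- coefficient computation
    have hden : (∏ j, ((Φ ⟨f, g⟩ j).factorial : ℂ))
        = ∏ V : {V // V ∈ p}, ∏ t : Fin V.1.card, ((g V t).factorial : ℂ) := by
      rw [hprodP (fun j => ((Φ ⟨f, g⟩ j).factorial : ℂ))]
      refine Finset.prod_congr rfl fun V _ => ?_
      rw [← hprodV (fun j => ((Φ ⟨f, g⟩ j).factorial : ℂ)) V]
      refine Finset.prod_congr rfl fun t _ => ?_
      rw [K g V t]
    rw [hκP, hden]
    rw [Finset.prod_mul_distrib, Finset.prod_div_distrib]
    have hX : (∏ V : {V // V ∈ p}, ((f V).factorial : ℂ)) ≠ 0 := by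
      apply Finset.prod_ne_zero_iff.2
      intro V _
      exact_mod_cast (Nat.factorial_ne_zero _)
    set X := ∏ V : {V // V ∈ p}, ((f V).factorial : ℂ)
    set Y := ∏ V : {V // V ∈ p}, ∏ t : Fin V.1.card, ((g V t).factorial : ℂ)
    set Pk := ∏ V : {V // V ∈ p}, κ V.1.card (fun t => (D ^ (g V t)) (restrictTuple a V.1 t))
    rw [← mul_assoc, div_mul_div_comm, mul_comm ((i.factorial : ℂ)) X, mul_div_mul_left _ _ hX]



lemma key_formula
    (hD : ∀ a b : A, D (a * b) = D a * b + a * D b)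
    (φ : A →ₗ[ℂ] ℂ)
    (hκ : ∀ (n : ℕ), 1 ≤ n → ∀ a : Fin n → A,
      ∑ p ∈ ncFinset n, ∏ V ∈ p, κ V.card (restrictTuple a V) = φ (List.ofFn a).prod)
    (i : ℕ) (n : ℕ) (hn : 1 ≤ n) (a : Fin n → A) :
    ∑ p ∈ ncFinset n,
      ∑ f ∈ ((Fintype.piFinset fun _ : {V // V ∈ p} => Finset.range (i + 1)) |>.filter
          (fun f => ∑ V, f V = i)),
        ((i.factorial : ℂ) / ∏ V, ((f V).factorial : ℂ)) *
          ∏ V : {V // V ∈ p}, cand D κ (f V) V.1.card (restrictTuple a V.1)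
    = φ ((D ^ i) (List.ofFn a).prod) := by
  rw [leibniz_tuple hD n a i, map_sum]
  have hterm : ∀ lam ∈ Finset.Nat.antidiagonalTuple n i,
      φ ((Nat.multinomial Finset.univ lam) • (List.ofFn fun j => (D ^ (lam j)) (a j)).prod)
      = ((i.factorial : ℂ) / ∏ j, ((lam j).factorial : ℂ)) *
          ∑ p ∈ ncFinset n, ∏ V ∈ p, κ V.card
            (restrictTuple (fun j => (D ^ (lam j)) (a j)) V) := by
    intro lam hlam
    rw [map_nsmul, nsmul_eq_mul, hκ n hn (fun j => (D ^ (lam j)) (a j)),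
      mult_cast lam (Finset.Nat.mem_antidiagonalTuple.1 hlam)]
  rw [Finset.sum_congr rfl hterm]
  simp_rw [Finset.mul_sum]
  rw [Finset.sum_comm]
  refine Finset.sum_congr rfl fun p hmem => ?_
  exact per_partition D κ (mem_ncFinset_isPartition hmem) i a

end Key

/-- The defining (infinitesimal) moment-cumulant formula: the family
`(κ^{(i)}_n)_{n ≥ 1, 0 ≤ i ≤ k}` of multilinear functionals (indexed by `ℕ`, only the
indices `i ≤ k` being relevant) is the family of infinitesimal non-crossing cumulant
functionals of `(A, (φ^{(i)})_{0 ≤ i ≤ k})`: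
`Σ_{p ∈ NC(n)} Σ_{f : p → ℕ, Σ f = i} (i!/∏_V f(V)!) ∏_{V∈p} κ^{(f(V))}_{|V|}((a)|V)
  = φ^{(i)}(a_1⋯a_n)`. -/
def InfCumFormula (k : ℕ) {A : Type*} [Ring A] [Algebra ℂ A]
    (φ : ℕ → (A →ₗ[ℂ] ℂ))
    (κ : ℕ → (n : ℕ) → MultilinearMap ℂ (fun _ : Fin n => A) ℂ) : Prop :=
  ∀ i ≤ k, ∀ (n : ℕ), 1 ≤ n → ∀ a : Fin n → A,
    ∑ p ∈ ncFinset n,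
      ∑ f ∈ (Fintype.piFinset fun _ : {V // V ∈ p} => Finset.range (i + 1)) |>.filter
          (fun f => ∑ V, f V = i),
        ((i.factorial : ℂ) / ∏ V, ((f V).factorial : ℂ)) *
          ∏ V : {V // V ∈ p}, κ (f V) V.1.card (restrictTuple a V.1)
    = φ i (List.ofFn a).prod

/-- **Statement 3.** Let `(A, φ)` be a noncommutative probability space, `D : A → A` a
derivation, and `φ^{(i)} := φ ∘ D^i` for `0 ≤ i ≤ k`. If `(κ_n)` are the free cumulant
functionals of `(A, φ)` and `(κ_n^{(i)})` the infinitesimal non-crossing cumulant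
functionals of `(A, (φ ∘ D^i)_{0 ≤ i ≤ k})`, then for all `n ≥ 1`, `0 ≤ i ≤ k` and
`a_1, …, a_n ∈ A`:
`κ_n^{(i)}(a_1,…,a_n) = Σ_{λ ∈ Λ_{n,i}} (i!/(λ_1!⋯λ_n!)) κ_n(D^{λ_1}a_1, …, D^{λ_n}a_n)`. -/
theorem stmt3 (k : ℕ) (A : Type*) [Ring A] [Algebra ℂ A]
    (φ : A →ₗ[ℂ] ℂ) (hφ : φ 1 = 1)
    (D : A →ₗ[ℂ] A) (hD : ∀ a b : A, D (a * b) = D a * b + a * D b)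
    (κ : (n : ℕ) → MultilinearMap ℂ (fun _ : Fin n => A) ℂ)
    (hκ : ∀ (n : ℕ), 1 ≤ n → ∀ a : Fin n → A,
      ∑ p ∈ ncFinset n, ∏ V ∈ p, κ V.card (restrictTuple a V) = φ (List.ofFn a).prod)
    (κinf : ℕ → (n : ℕ) → MultilinearMap ℂ (fun _ : Fin n => A) ℂ)
    (hκinf : InfCumFormula k (fun i => φ ∘ₗ (D ^ i)) κinf)
    (n : ℕ) (hn : 1 ≤ n) (i : ℕ) (hi : i ≤ k) (a : Fin n → A) :
    κinf i n a = ∑ lam ∈ Finset.Nat.antidiagonalTuple n i,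
      ((i.factorial : ℂ) / ∏ j, ((lam j).factorial : ℂ)) *
        κ n (fun j => (D ^ (lam j)) (a j)) := by
  suffices H : ∀ n, 1 ≤ n → ∀ i ≤ k, ∀ a : Fin n → A, κinf i n a = cand D κ i n a by
    exact (H n hn i hi a).trans rfl
  clear hn hi a n i
  intro n
  induction n using Nat.strong_induction_on with
  | _ n IH =>
  intro hn i hi a
  have h1 := hκinf i hi n hn a
  have h2 := key_formula D κ hD φ hκ i n hn a
  have h12 : ∑ p ∈ ncFinset n,
      ∑ f ∈ ((Fintype.piFinset fun _ : {V // V ∈ p} => Finset.range (i + 1)) |>.filter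
          (fun f => ∑ V, f V = i)),
        ((i.factorial : ℂ) / ∏ V, ((f V).factorial : ℂ)) *
          ∏ V : {V // V ∈ p}, κinf (f V) V.1.card (restrictTuple a V.1)
      = ∑ p ∈ ncFinset n,
      ∑ f ∈ ((Fintype.piFinset fun _ : {V // V ∈ p} => Finset.range (i + 1)) |>.filter
          (fun f => ∑ V, f V = i)),
        ((i.factorial : ℂ) / ∏ V, ((f V).factorial : ℂ)) *
          ∏ V : {V // V ∈ p}, cand D κ (f V) V.1.card (restrictTuple a V.1) :=
    h1.trans h2.symm
  set p0 : Finset (Finset (Fin n)) := {Finset.univ} with hp0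
  have hp0mem : p0 ∈ ncFinset n := full_mem_ncFinset hn
  have hrest : ∀ p ∈ (ncFinset n).erase p0,
      (∑ f ∈ ((Fintype.piFinset fun _ : {V // V ∈ p} => Finset.range (i + 1)) |>.filter
          (fun f => ∑ V, f V = i)),
        ((i.factorial : ℂ) / ∏ V, ((f V).factorial : ℂ)) *
          ∏ V : {V // V ∈ p}, κinf (f V) V.1.card (restrictTuple a V.1))
      = ∑ f ∈ ((Fintype.piFinset fun _ : {V // V ∈ p} => Finset.range (i + 1)) |>.filter
          (fun f => ∑ V, f V = i)),
        ((i.factorial : ℂ) / ∏ V, ((f V).factorial : ℂ)) *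
          ∏ V : {V // V ∈ p}, cand D κ (f V) V.1.card (restrictTuple a V.1) := by
    intro p hpmem
    rw [Finset.mem_erase] at hpmem
    have hp := mem_ncFinset_isPartition hpmem.2
    refine Finset.sum_congr rfl fun f hf => ?_
    congr 1
    refine Finset.prod_congr rfl fun V _ => ?_
    rw [Finset.mem_filter, Fintype.mem_piFinset] at hf
    have hfV : f V ≤ i := Nat.lt_succ_iff.1 (Finset.mem_range.1 (hf.1 V))
    exact IH V.1.card (block_card_lt hp hpmem.1 V.2) (block_card_pos hp V.2)
      (f V) (le_trans hfV hi) (restrictTuple a V.1)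
  rw [← Finset.add_sum_erase _ _ hp0mem, ← Finset.add_sum_erase _ _ hp0mem,
    Finset.sum_congr rfl hrest] at h12
  have hmain := add_right_cancel h12
  -- analyze the p0 term
  haveI hu : Unique {V // V ∈ p0} := by
    refine ⟨⟨⟨Finset.univ, Finset.mem_singleton_self _⟩⟩, ?_⟩
    rintro ⟨V, hV⟩
    rw [hp0, Finset.mem_singleton] at hV
    exact Subtype.ext hV
  have hfilter : ((Fintype.piFinset fun _ : {V // V ∈ p0} => Finset.range (i + 1)) |>.filter
      (fun f => ∑ V, f V = i)) = {fun _ => i} := by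
    ext f
    rw [Finset.mem_filter, Fintype.mem_piFinset, Finset.mem_singleton]
    constructor
    · rintro ⟨-, hsum⟩
      funext V
      rw [Unique.eq_default V]
      rw [Fintype.sum_unique] at hsum
      exact hsum
    · rintro rfl
      refine ⟨fun V => Finset.self_mem_range_succ i, ?_⟩
      rw [Fintype.sum_unique]
  rw [hfilter, Finset.sum_singleton, Finset.sum_singleton] at hmain
  have hcoef : ((i.factorial : ℂ) / ((i).factorial : ℂ)) ≠ 0 := by
    apply div_ne_zero <;> exact_mod_cast Nat.factorial_ne_zero i
  rw [Fintype.prod_unique, Fintype.prod_unique, Fintype.prod_unique] at hmain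
  have heq := mul_left_cancel₀ hcoef hmain
  have hdef : ((default : {V // V ∈ p0}) : Finset (Fin n)) = Finset.univ := by
    exact Finset.mem_singleton.1 (default : {V // V ∈ p0}).2
  have g1 := eval_congr (fun m v => κinf i m v) a hdef
  have g2 := eval_congr (fun m v => cand D κ i m v) a hdef
  replace heq := (g1.symm.trans heq).trans g2
  -- now cast from univ.card to n
  have hcard : (Finset.univ : Finset (Fin n)).card = n := by simp
  have heq' : κinf i (Finset.univ : Finset (Fin n)).card
        (restrictTuple a (Finset.univ : Finset (Fin n)))
      = cand D κ i (Finset.univ : Finset (Fin n)).card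
        (restrictTuple a (Finset.univ : Finset (Fin n))) := heq
  rw [restrict_univ a hcard] at heq'
  have e1 := cast_eval (fun m v => κinf i m v) hcard a
  have e2 := cast_eval (fun m v => cand D κ i m v) hcard a
  show κinf i n a = cand D κ i n a
  rw [← e1, ← e2]
  exact heq'
end

section
/- Fix n ≥ 1 and take k = 1. Let σ : [2n] → [2n] be the involution defined by σ(x) = x + n if x ≤ n and σ(x) = x − n if x > n. Then a non-crossing partition π of [2n] is invariant under σ (i.e., the image under σ of every block of π is again a block of π) if and only if π ∈ NC^{(1)}(n). (Under the identification of [±n] = {1 < 2 < ... < n < −1 < −2 < ... < −n} with [2n] via i ↦ i and −i ↦ n + i, the σ-invariant non-crossing partitions of [2n] are exactly Reiner's type B non-crossing partitions NC^B(n); thus NC^B(n) = NC^{(1)}(n).) -/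
open scoped BigOperators
attribute [local instance] Classical.propDecidable

/-- The interleaved set `[m] ∪ [m̄]` with order `1 < 1̄ < 2 < 2̄ < ⋯ < m < m̄`
(unbarred = `false`, barred = `true`). -/
abbrev Interl (m : ℕ) := Lex (Fin m × Bool)

/-- The copy of a block of `[m]` inside the unbarred part of `[m] ∪ [m̄]`. -/
def unbar {m : ℕ} (B : Finset (Fin m)) : Finset (Interl m) :=
  B.image fun i => toLex (i, false)

/-- The copy of a block of `[m]` inside the barred part of `[m] ∪ [m̄]`. -/
def barred {m : ℕ} (B : Finset (Fin m)) : Finset (Interl m) :=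
  B.image fun i => toLex (i, true)

/-- The union `p ∪ q` of a partition `p` of `[m]` and a partition `q` of the barred copy
`[m̄]` (blocks of `q` being recorded by their unbarred labels), as a collection of blocks
of the interleaved set `[m] ∪ [m̄]`. -/
noncomputable def unionPart {m : ℕ} (p q : Finset (Finset (Fin m))) :
    Finset (Finset (Interl m)) :=
  p.image unbar ∪ q.image barred

/-- `P` refines `Q` (reverse refinement order: `P ≼ Q`). -/
def Refines {X : Type*} (P Q : Finset (Finset X)) : Prop :=
  ∀ B ∈ P, ∃ C ∈ Q, B ⊆ C

/-- `q` is the Kreweras complement of `p`: `q` is a partition of `[m̄]` (identified with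
a partition of `[m]` by relabeling) such that `p ∪ q` is non-crossing on the interleaved
set, and `q` is the greatest such partition for the reverse refinement order. -/
def IsKr {m : ℕ} (p q : Finset (Finset (Fin m))) : Prop :=
  IsPartition q ∧ IsNonCrossing (unionPart p q) ∧
    ∀ q' : Finset (Finset (Fin m)), IsPartition q' → IsNonCrossing (unionPart p q') →
      Refines q' q

/-- The Kreweras complement `Kr(p)`, as a function (defined via choice: for a
non-crossing partition `p` the complement exists and is unique). -/
noncomputable def kr {m : ℕ} (p : Finset (Finset (Fin m))) : Finset (Finset (Fin m)) :=
  if h : ∃ q, IsKr p q then h.choose else ∅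
/-- The reduction map `Red : [(k+1)n] → [n]`, sending `x` to its residue mod `n`
(with `Fin` modelling, `x ↦ x % n`). -/
def red {k n : ℕ} (x : Fin ((k + 1) * n)) : Fin n :=
  ⟨x.1 % n, Nat.mod_lt _ (Nat.pos_of_ne_zero (by rintro rfl; exact absurd x.2 (by simp)))⟩

/-- The image of a collection of blocks under the reduction map. -/
noncomputable def redPart {k n : ℕ} (P : Finset (Finset (Fin ((k + 1) * n)))) :
    Finset (Finset (Fin n)) :=
  P.image fun B => B.image red

/-- The reduction map on the interleaved set, preserving bars. -/
def redInterl {k n : ℕ} (x : Interl ((k + 1) * n)) : Interl n :=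
  toLex (red (ofLex x).1, (ofLex x).2)

/-- `NC^{(k)}(n)`: the non-crossing partitions of `[(k+1)n]` satisfying the mod `n`
reduction property, i.e. `Red(π)` is a non-crossing partition of `[n]` and
`Red(Kr(π))` is a non-crossing partition of `[n̄]`. -/
def NCk (k n : ℕ) : Set (Finset (Finset (Fin ((k + 1) * n)))) :=
  {π | IsPartition π ∧ IsNonCrossing π ∧
       IsPartition (redPart π) ∧ IsNonCrossing (redPart π) ∧
       IsPartition (redPart (kr π)) ∧ IsNonCrossing (redPart (kr π))}

/-- The involution `σ` of `[2n]` given by `σ(x) = x + n` if `x ≤ n`, `σ(x) = x − n`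
otherwise (0-indexed: swap the two halves of `Fin (2n)`). -/
def sigmaInv {n : ℕ} (x : Fin (2 * n)) : Fin (2 * n) :=
  if h : x.1 < n then ⟨x.1 + n, by omega⟩ else ⟨x.1 - n, by omega⟩

namespace Stmt7Aux
open Finset

variable {m n : ℕ}

/-- The Kreweras equivalence: `i ≈ j` iff no block of `π` is split by the
interval `(min i j, max i j]`; membership in that interval for `x` is
`¬(x ≤ i ↔ x ≤ j)`, so "not split" means the predicate `(x ≤ i ↔ x ≤ j)` is
constant on each block. -/
def eqv (π : Finset (Finset (Fin m))) (i j : Fin m) : Prop :=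
  ∀ B ∈ π, ∀ x ∈ B, ∀ y ∈ B, ((x ≤ i ↔ x ≤ j) ↔ (y ≤ i ↔ y ≤ j))

lemma eqv_refl (π : Finset (Finset (Fin m))) (i : Fin m) : eqv π i i := by
  intro B _ x _ y _; tauto

lemma eqv_symm {π : Finset (Finset (Fin m))} {i j : Fin m} (h : eqv π i j) : eqv π j i := by
  intro B hB x hx y hy; have := h B hB x hx y hy; tauto

lemma eqv_trans {π : Finset (Finset (Fin m))} {i j k : Fin m} (h1 : eqv π i j)
    (h2 : eqv π j k) : eqv π i k := by
  intro B hB x hx y hy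
  have a1 := h1 B hB x hx y hy; have a2 := h2 B hB x hx y hy; tauto

lemma eqv_cross {π : Finset (Finset (Fin m))} {a b c d : Fin m} (hab : a < b) (hbc : b < c)
    (hcd : c < d) (hac : eqv π a c) (hbd : eqv π b d) : eqv π a b := by
  intro B hB x hx y hy
  have h1 := hac B hB x hx y hy
  have h2 := hbd B hB x hx y hy
  simp only [Fin.le_def, Fin.lt_def] at *
  omega

/-- The `eqv`-class of `i`. -/
noncomputable def cls (π : Finset (Finset (Fin m))) (i : Fin m) : Finset (Fin m) :=
  univ.filter (eqv π i)

lemma mem_cls {π : Finset (Finset (Fin m))} {i j : Fin m} : j ∈ cls π i ↔ eqv π i j := by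
  simp [cls]

lemma cls_eq {π : Finset (Finset (Fin m))} {i j : Fin m} (h : eqv π i j) :
    cls π i = cls π j := by
  ext x; simp only [mem_cls]
  exact ⟨fun hx => eqv_trans (eqv_symm h) hx, fun hx => eqv_trans h hx⟩

/-- The candidate Kreweras complement: the set of `eqv`-classes. -/
noncomputable def qhat (π : Finset (Finset (Fin m))) : Finset (Finset (Fin m)) :=
  univ.image (cls π)

lemma cls_mem_qhat (π : Finset (Finset (Fin m))) (i : Fin m) : cls π i ∈ qhat π :=
  mem_image_of_mem _ (mem_univ i)

lemma qhat_partition (π : Finset (Finset (Fin m))) : IsPartition (qhat π) := by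
  constructor
  · rintro B hB
    obtain ⟨i, -, rfl⟩ := mem_image.1 hB
    exact ⟨i, mem_cls.2 (eqv_refl π i)⟩
  · intro x
    refine ⟨cls π x, ⟨cls_mem_qhat π x, mem_cls.2 (eqv_refl π x)⟩, ?_⟩
    rintro C ⟨hC, hxC⟩
    obtain ⟨i, -, rfl⟩ := mem_image.1 hC
    exact cls_eq (mem_cls.1 hxC)

end Stmt7Aux
namespace Stmt7Aux
open Finset

variable {m : ℕ}

lemma mem_unbar {B : Finset (Fin m)} {i : Fin m} {s : Bool} :
    toLex (i, s) ∈ unbar B ↔ i ∈ B ∧ s = false := by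
  simp only [unbar, Finset.mem_image]
  constructor
  · rintro ⟨j, hj, h⟩
    have h2 := toLex.injective h
    injection h2 with h3 h4
    exact ⟨h3 ▸ hj, h4.symm⟩
  · rintro ⟨hi, rfl⟩; exact ⟨i, hi, rfl⟩

lemma mem_barred {B : Finset (Fin m)} {i : Fin m} {s : Bool} :
    toLex (i, s) ∈ barred B ↔ i ∈ B ∧ s = true := by
  simp only [barred, Finset.mem_image]
  constructor
  · rintro ⟨j, hj, h⟩
    have h2 := toLex.injective h
    injection h2 with h3 h4
    exact ⟨h3 ▸ hj, h4.symm⟩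
  · rintro ⟨hi, rfl⟩; exact ⟨i, hi, rfl⟩

lemma interl_lt {i j : Fin m} {s t : Bool} :
    toLex (i, s) < toLex (j, t) ↔ (i < j ∨ (i = j ∧ s < t)) := Prod.Lex.lt_iff

lemma lt_same {i j : Fin m} {s : Bool} : toLex (i, s) < toLex (j, s) ↔ i.1 < j.1 := by
  rw [interl_lt]
  constructor
  · rintro (h | ⟨-, h2⟩)
    · exact Fin.lt_def.1 h
    · exact absurd h2 (lt_irrefl s)
  · exact fun h => Or.inl (Fin.lt_def.2 h)
lemma lt_ff {i j : Fin m} : toLex (i, false) < toLex (j, false) ↔ i.1 < j.1 := lt_same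
lemma lt_tt {i j : Fin m} : toLex (i, true) < toLex (j, true) ↔ i.1 < j.1 := lt_same
lemma lt_tf {i j : Fin m} : toLex (i, true) < toLex (j, false) ↔ i.1 < j.1 := by
  rw [interl_lt]
  constructor
  · rintro (h | ⟨-, h2⟩)
    · exact Fin.lt_def.1 h
    · exact absurd h2 (by decide)
  · exact fun h => Or.inl (Fin.lt_def.2 h)
lemma lt_ft {i j : Fin m} : toLex (i, false) < toLex (j, true) ↔ i.1 ≤ j.1 := by
  rw [interl_lt]
  constructor
  · rintro (h | ⟨h, -⟩)
    · exact le_of_lt (Fin.lt_def.1 h)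
    · exact le_of_eq (congrArg Fin.val h)
  · intro h
    rcases lt_or_eq_of_le h with h' | h'
    · exact Or.inl (Fin.lt_def.2 h')
    · exact Or.inr ⟨Fin.ext h', by decide⟩

/-- No block of `unionPart P Q` contains both a barred and an unbarred element. -/
lemma not_mixed {P Q : Finset (Finset (Fin m))} {Z : Finset (Interl m)}
    (hZ : Z ∈ unionPart P Q) {i j : Fin m}
    (h1 : toLex (i, true) ∈ Z) (h2 : toLex (j, false) ∈ Z) : False := by
  rcases Finset.mem_union.1 hZ with hZ' | hZ'
  · obtain ⟨B, -, rfl⟩ := mem_image.1 hZ'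
    exact absurd (mem_unbar.1 h1).2 (by simp)
  · obtain ⟨B, -, rfl⟩ := mem_image.1 hZ'
    exact absurd (mem_barred.1 h2).2 (by simp)

/-- Crossing contradiction: if `l,h` lie in a block `C` of `q'`, `u ∈ B ∈ π` lies
strictly between them and `v ∈ B` lies outside, then `unionPart π q'` is crossing. -/
lemma no_split {π q' : Finset (Finset (Fin m))} (hncu : IsNonCrossing (unionPart π q'))
    {C : Finset (Fin m)} (hC : barred C ∈ unionPart π q') {B : Finset (Fin m)}
    (hB : unbar B ∈ unionPart π q')
    {l h u v : Fin m} (hl : l ∈ C) (hh : h ∈ C) (hu : u ∈ B) (hv : v ∈ B)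
    (h1 : l.1 < u.1) (h2 : u.1 ≤ h.1) (h3 : v.1 ≤ l.1 ∨ h.1 < v.1) : False := by
  rcases h3 with h3 | h3
  · obtain ⟨Z, hZ, hZ1, hZ2⟩ :=
      hncu (toLex (v, false)) (toLex (l, true)) (toLex (u, false)) (toLex (h, true))
        (lt_ft.2 h3) (lt_tf.2 h1) (lt_ft.2 h2)
        ⟨unbar B, hB, mem_unbar.2 ⟨hv, rfl⟩, mem_unbar.2 ⟨hu, rfl⟩⟩
        ⟨barred C, hC, mem_barred.2 ⟨hl, rfl⟩, mem_barred.2 ⟨hh, rfl⟩⟩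
    exact not_mixed hZ hZ2 hZ1
  · obtain ⟨Z, hZ, hZ1, hZ2⟩ :=
      hncu (toLex (l, true)) (toLex (u, false)) (toLex (h, true)) (toLex (v, false))
        (lt_tf.2 h1) (lt_ft.2 h2) (lt_tf.2 h3)
        ⟨barred C, hC, mem_barred.2 ⟨hl, rfl⟩, mem_barred.2 ⟨hh, rfl⟩⟩
        ⟨unbar B, hB, mem_unbar.2 ⟨hu, rfl⟩, mem_unbar.2 ⟨hv, rfl⟩⟩
    exact not_mixed hZ hZ1 hZ2

lemma unbar_mem_unionPart {π q : Finset (Finset (Fin m))} {B : Finset (Fin m)} (hB : B ∈ π) :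
    unbar B ∈ unionPart π q :=
  Finset.mem_union.2 (Or.inl (mem_image_of_mem _ hB))

lemma barred_mem_unionPart {π q : Finset (Finset (Fin m))} {C : Finset (Fin m)} (hC : C ∈ q) :
    barred C ∈ unionPart π q :=
  Finset.mem_union.2 (Or.inr (mem_image_of_mem _ hC))

end Stmt7Aux
namespace Stmt7Aux
open Finset

variable {m : ℕ}

lemma unionPart_nc {π : Finset (Finset (Fin m))} (hnc : IsNonCrossing π) :
    IsNonCrossing (unionPart π (qhat π)) := by
  rintro a b c d hab hbc hcd ⟨X, hX, haX, hcX⟩ ⟨Y, hY, hbY, hdY⟩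
  rcases Finset.mem_union.1 hX with hX' | hX'
  · obtain ⟨B1, hB1, rfl⟩ := mem_image.1 hX'
    obtain ⟨a0, ha0, rfl⟩ := mem_image.1 haX
    obtain ⟨c0, hc0, rfl⟩ := mem_image.1 hcX
    rcases Finset.mem_union.1 hY with hY' | hY'
    · -- both unbarred: use non-crossing of π
      obtain ⟨B2, hB2, rfl⟩ := mem_image.1 hY'
      obtain ⟨b0, hb0, rfl⟩ := mem_image.1 hbY
      obtain ⟨d0, hd0, rfl⟩ := mem_image.1 hdY
      obtain ⟨K, hK, h1, h2⟩ := hnc a0 b0 c0 d0 (Fin.lt_def.2 (lt_ff.1 hab))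
        (Fin.lt_def.2 (lt_ff.1 hbc)) (Fin.lt_def.2 (lt_ff.1 hcd))
        ⟨B1, hB1, ha0, hc0⟩ ⟨B2, hB2, hb0, hd0⟩
      exact ⟨unbar K, unbar_mem_unionPart hK, mem_unbar.2 ⟨h1, rfl⟩, mem_unbar.2 ⟨h2, rfl⟩⟩
    · -- X unbarred, Y barred: impossible
      exfalso
      obtain ⟨C, hC, rfl⟩ := mem_image.1 hY'
      obtain ⟨i, -, rfl⟩ := mem_image.1 hC
      obtain ⟨b0, hb0, rfl⟩ := mem_image.1 hbY
      obtain ⟨d0, hd0, rfl⟩ := mem_image.1 hdY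
      have hE : eqv π b0 d0 := eqv_trans (eqv_symm (mem_cls.1 hb0)) (mem_cls.1 hd0)
      have h := hE B1 hB1 c0 hc0 a0 ha0
      have i1 := lt_ft.1 hab
      have i2 := lt_tf.1 hbc
      have i3 := lt_ft.1 hcd
      simp only [Fin.le_def] at h
      omega
  · obtain ⟨C1, hC1, rfl⟩ := mem_image.1 hX'
    obtain ⟨i, -, rfl⟩ := mem_image.1 hC1
    obtain ⟨a0, ha0, rfl⟩ := mem_image.1 haX
    obtain ⟨c0, hc0, rfl⟩ := mem_image.1 hcX
    have hEac : eqv π a0 c0 := eqv_trans (eqv_symm (mem_cls.1 ha0)) (mem_cls.1 hc0)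
    rcases Finset.mem_union.1 hY with hY' | hY'
    · -- X barred, Y unbarred: impossible
      exfalso
      obtain ⟨B2, hB2, rfl⟩ := mem_image.1 hY'
      obtain ⟨b0, hb0, rfl⟩ := mem_image.1 hbY
      obtain ⟨d0, hd0, rfl⟩ := mem_image.1 hdY
      have h := hEac B2 hB2 b0 hb0 d0 hd0
      have i1 := lt_tf.1 hab
      have i2 := lt_ft.1 hbc
      have i3 := lt_tf.1 hcd
      simp only [Fin.le_def] at h
      omega
    · -- both barred: classes are non-crossing
      obtain ⟨C2, hC2, rfl⟩ := mem_image.1 hY'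
      obtain ⟨j, -, rfl⟩ := mem_image.1 hC2
      obtain ⟨b0, hb0, rfl⟩ := mem_image.1 hbY
      obtain ⟨d0, hd0, rfl⟩ := mem_image.1 hdY
      have hEbd : eqv π b0 d0 := eqv_trans (eqv_symm (mem_cls.1 hb0)) (mem_cls.1 hd0)
      have hEab : eqv π a0 b0 := eqv_cross (Fin.lt_def.2 (lt_tt.1 hab))
        (Fin.lt_def.2 (lt_tt.1 hbc)) (Fin.lt_def.2 (lt_tt.1 hcd)) hEac hEbd
      refine ⟨barred (cls π i), barred_mem_unionPart (cls_mem_qhat π i),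
        mem_barred.2 ⟨ha0, rfl⟩, mem_barred.2 ⟨?_, rfl⟩⟩
      exact mem_cls.2 (eqv_trans (mem_cls.1 ha0) hEab)

lemma qhat_max {π q' : Finset (Finset (Fin m))} (hq' : IsPartition q')
    (hncu : IsNonCrossing (unionPart π q')) : Refines q' (qhat π) := by
  intro C hC
  obtain ⟨i, hi⟩ := hq'.1 C hC
  refine ⟨cls π i, cls_mem_qhat π i, ?_⟩
  intro j hj
  rw [mem_cls]
  intro B hB x hx y hy
  by_contra hcon
  have hCu : barred C ∈ unionPart π q' := barred_mem_unionPart hC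
  have hBu : unbar B ∈ unionPart π q' := unbar_mem_unionPart hB
  simp only [Fin.le_def] at hcon
  rcases le_total i.1 j.1 with hij | hij
  · by_cases hxin : i.1 < x.1 ∧ x.1 ≤ j.1
    · exact no_split hncu hCu hBu hi hj hx hy hxin.1 hxin.2 (by omega)
    · exact no_split hncu hCu hBu hi hj hy hx (by omega) (by omega) (by omega)
  · by_cases hxin : j.1 < x.1 ∧ x.1 ≤ i.1
    · exact no_split hncu hCu hBu hj hi hx hy hxin.1 hxin.2 (by omega)
    · exact no_split hncu hCu hBu hj hi hy hx (by omega) (by omega) (by omega)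

lemma partition_eq_of_refines {X : Type*} {q1 q2 : Finset (Finset X)} (h1 : IsPartition q1)
    (h2 : IsPartition q2) (r12 : Refines q1 q2) (r21 : Refines q2 q1) : q1 = q2 := by
  have key : ∀ (qa qb : Finset (Finset X)), IsPartition qa → Refines qa qb → Refines qb qa →
      ∀ B ∈ qa, B ∈ qb := by
    intro qa qb ha rab rba B hB
    obtain ⟨C, hC, hBC⟩ := rab B hB
    obtain ⟨B', hB', hCB'⟩ := rba C hC
    obtain ⟨x, hx⟩ := ha.1 B hB
    obtain ⟨U, -, hU⟩ := ha.2 x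
    have e1 : B = U := hU B ⟨hB, hx⟩
    have e2 : B' = U := hU B' ⟨hB', hCB' (hBC hx)⟩
    have e3 : C = B := Finset.Subset.antisymm ((e1.trans e2.symm) ▸ hCB') hBC
    exact e3 ▸ hC
  exact Finset.ext fun B => ⟨fun h => key _ _ h1 r12 r21 B h, fun h => key _ _ h2 r21 r12 B h⟩

lemma isKr_qhat {π : Finset (Finset (Fin m))} (hnc : IsNonCrossing π) : IsKr π (qhat π) :=
  ⟨qhat_partition π, unionPart_nc hnc, fun _ hq' hncu => qhat_max hq' hncu⟩

lemma kr_eq {π : Finset (Finset (Fin m))} (hnc : IsNonCrossing π) : kr π = qhat π := by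
  have hk := isKr_qhat hnc
  have hex : ∃ q, IsKr π q := ⟨_, hk⟩
  rw [kr, dif_pos hex]
  have hspec := hex.choose_spec
  exact partition_eq_of_refines hspec.1 hk.1
    (hk.2.2 _ hspec.1 hspec.2.1) (hspec.2.2 _ hk.1 hk.2.1)

end Stmt7Aux
namespace Stmt7Aux
open Finset

variable {n : ℕ}

lemma sig_val (x : Fin (2 * n)) :
    (sigmaInv x).1 = if x.1 < n then x.1 + n else x.1 - n := by
  simp only [sigmaInv]
  split <;> rfl

lemma sig_invol (x : Fin (2 * n)) : sigmaInv (sigmaInv x) = x := by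
  have hx := x.2
  apply Fin.ext
  rw [sig_val, sig_val]
  split_ifs <;> omega

lemma red_val (x : Fin (2 * n)) : (red (k := 1) x).1 = x.1 % n := rfl

lemma mod2n {c : ℕ} (hc : c < 2 * n) : c % n = if c < n then c else c - n := by
  split_ifs with h
  · exact Nat.mod_eq_of_lt h
  · rw [Nat.mod_eq_sub_mod (le_of_not_gt h)]
    exact Nat.mod_eq_of_lt (by omega)

lemma red_sig (x : Fin (2 * n)) : red (k := 1) (sigmaInv x) = red (k := 1) x := by
  have hx := x.2
  apply Fin.ext
  rw [red_val, red_val, sig_val]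
  rcases Nat.lt_or_ge x.1 n with h | h
  · rw [if_pos h, Nat.add_mod_right]
  · rw [if_neg (not_lt.2 h)]
    exact (Nat.mod_eq_sub_mod h).symm

lemma red_eq_cases {x y : Fin (2 * n)} (h : red (k := 1) x = red (k := 1) y) :
    x = y ∨ x = sigmaInv y := by
  have hx := x.2; have hy := y.2
  have h' : x.1 % n = y.1 % n := congrArg Fin.val h
  have e1 := mod2n hx
  have e2 := mod2n hy
  simp only [Fin.ext_iff, sig_val]
  split_ifs at * <;> omega

lemma red_image_sig (B : Finset (Fin (2 * n))) :
    (B.image sigmaInv).image (red (k := 1)) = B.image (red (k := 1)) := by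
  rw [Finset.image_image]
  exact Finset.image_congr fun x _ => red_sig x

/-- Blocks of a partition are determined by any of their elements. -/
lemma block_eq {X : Type*} {P : Finset (Finset X)} (hP : IsPartition P) {B B' : Finset X}
    (hB : B ∈ P) (hB' : B' ∈ P) {x : X} (hx : x ∈ B) (hx' : x ∈ B') : B = B' := by
  obtain ⟨U, -, hU⟩ := hP.2 x
  exact (hU B ⟨hB, hx⟩).trans (hU B' ⟨hB', hx'⟩).symm

/-- L1: the reduction of a `σ`-invariant partition of `[2n]` is a partition of `[n]`. -/
lemma redPart_partition (hn : 1 ≤ n) {P : Finset (Finset (Fin (2 * n)))}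
    (hP : IsPartition P) (hinv : ∀ B ∈ P, B.image sigmaInv ∈ P) :
    IsPartition (redPart (k := 1) P) := by
  constructor
  · intro C hC
    obtain ⟨B, hB, rfl⟩ := mem_image.1 hC
    obtain ⟨x, hx⟩ := hP.1 B hB
    exact ⟨red (k := 1) x, mem_image_of_mem _ hx⟩
  · intro a
    have ha2 : a.1 < 2 * n := by omega
    set la : Fin (2 * n) := ⟨a.1, ha2⟩ with hla
    have hred : red (k := 1) la = a := by apply Fin.ext; rw [red_val]; exact Nat.mod_eq_of_lt a.2
    obtain ⟨B, ⟨hB, hlaB⟩, -⟩ := hP.2 la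
    refine ⟨B.image (red (k := 1)), ⟨mem_image_of_mem _ hB, hred ▸ mem_image_of_mem _ hlaB⟩, ?_⟩
    rintro C ⟨hC, haC⟩
    obtain ⟨B', hB', rfl⟩ := mem_image.1 hC
    obtain ⟨y, hy, hyr⟩ := mem_image.1 haC
    rcases red_eq_cases (hyr.trans hred.symm) with rfl | rfl
    · rw [block_eq hP hB' hB hy hlaB]
    · have hσ : sigmaInv la ∈ B.image sigmaInv := mem_image_of_mem _ hlaB
      have : B' = B.image sigmaInv := block_eq hP hB' (hinv B hB) hy hσ
      rw [this, red_image_sig]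

end Stmt7Aux
namespace Stmt7Aux
open Finset

variable {n : ℕ}

lemma red_lift {a : Fin n} {x : Fin (2 * n)} (h : x.1 = a.1) : red (k := 1) x = a :=
  Fin.ext (by rw [red_val, h]; exact Nat.mod_eq_of_lt a.2)

lemma lift_block {P : Finset (Finset (Fin (2 * n)))} (hP : IsPartition P)
    (hinv : ∀ B ∈ P, B.image sigmaInv ∈ P) {C : Finset (Fin n)}
    (hC : C ∈ redPart (k := 1) P) {a : Fin n} (ha : a ∈ C) :
    ∃ B ∈ P, ∃ x ∈ B, x.1 = a.1 ∧ B.image (red (k := 1)) = C := by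
  obtain ⟨B0, hB0, rfl⟩ := mem_image.1 hC
  obtain ⟨x, hx, hxr⟩ := mem_image.1 ha
  have ha2 : a.1 < 2 * n := by omega
  have hra : red (k := 1) x = red (k := 1) (⟨a.1, ha2⟩ : Fin (2 * n)) := by
    rw [red_lift (x := (⟨a.1, ha2⟩ : Fin (2 * n))) rfl, hxr]
  rcases red_eq_cases hra with hxe | hxe
  · exact ⟨B0, hB0, x, hx, by rw [hxe], rfl⟩
  · refine ⟨B0.image sigmaInv, hinv B0 hB0, ⟨a.1, ha2⟩, ?_, rfl, red_image_sig B0⟩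
    have h1 : sigmaInv x ∈ B0.image sigmaInv := mem_image_of_mem _ hx
    rwa [hxe, sig_invol] at h1

lemma red_mem_cases {z : Fin (2 * n)} {c : Fin n} (h : red (k := 1) z = c) :
    z.1 = c.1 ∨ z.1 = c.1 + n := by
  have h' : z.1 % n = c.1 := congrArg Fin.val h
  have hz := z.2; have hc := c.2
  rw [mod2n hz] at h'
  split_ifs at h' <;> omega

/-- L2: the reduction of a `σ`-invariant non-crossing partition is non-crossing. -/
lemma redPart_nc (hn : 1 ≤ n) {P : Finset (Finset (Fin (2 * n)))} (hP : IsPartition P)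
    (hnc : IsNonCrossing P) (hinv : ∀ B ∈ P, B.image sigmaInv ∈ P) :
    IsNonCrossing (redPart (k := 1) P) := by
  have hrp := redPart_partition hn hP hinv
  rintro a b c d hab hbc hcd ⟨C1, hC1, haC1, hcC1⟩ ⟨C2, hC2, hbC2, hdC2⟩
  obtain ⟨B1, hB1, la, hla, hlav, hB1r⟩ := lift_block hP hinv hC1 haC1
  obtain ⟨B2, hB2, lb, hlb, hlbv, hB2r⟩ := lift_block hP hinv hC2 hbC2
  obtain ⟨z, hz, hzr⟩ := mem_image.1 (show c ∈ B1.image (red (k := 1)) from hB1r ▸ hcC1)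
  obtain ⟨w, hw, hwr⟩ := mem_image.1 (show d ∈ B2.image (red (k := 1)) from hB2r ▸ hdC2)
  have hzv := red_mem_cases hzr
  have hwv := red_mem_cases hwr
  have hab' := Fin.lt_def.1 hab
  have hbc' := Fin.lt_def.1 hbc
  have hcd' := Fin.lt_def.1 hcd
  have hbn := b.2; have hdn := d.2; have han := a.2; have hcn := c.2
  by_cases hsp : z.1 = c.1 + n ∧ w.1 = d.1
  · -- rotated case: use σB1 and the fact that reduced blocks form a partition
    have hB1' := hinv B1 hB1
    have hσz : sigmaInv z ∈ B1.image sigmaInv := mem_image_of_mem _ hz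
    have hσla : sigmaInv la ∈ B1.image sigmaInv := mem_image_of_mem _ hla
    have hσzv : (sigmaInv z).1 = c.1 := by rw [sig_val, if_neg (by omega)]; omega
    have hσlav : (sigmaInv la).1 = a.1 + n := by rw [sig_val, if_pos (by omega), hlav]
    obtain ⟨K, hK, hk1, hk2⟩ := hnc lb (sigmaInv z) w (sigmaInv la)
      (Fin.lt_def.2 (by omega)) (Fin.lt_def.2 (by omega)) (Fin.lt_def.2 (by omega))
      ⟨B2, hB2, hlb, hw⟩ ⟨B1.image sigmaInv, hB1', hσz, hσla⟩
    -- red K contains b and c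
    have hbK : b ∈ K.image (red (k := 1)) := by
      have h := mem_image_of_mem (red (k := 1)) hk1
      rwa [red_lift hlbv] at h
    have hcK : c ∈ K.image (red (k := 1)) := by
      have h := mem_image_of_mem (red (k := 1)) hk2
      rwa [red_sig z, hzr] at h
    have hKC1 : K.image (red (k := 1)) = C1 :=
      block_eq hrp (mem_image_of_mem _ hK) hC1 hcK hcC1
    exact ⟨C1, hC1, haC1, hKC1 ▸ hbK⟩
  · -- direct case: a crossing pattern already exists upstairs
    obtain ⟨K, hK, hk1, hk2⟩ := hnc la lb z w
      (Fin.lt_def.2 (by omega)) (Fin.lt_def.2 (by omega)) (Fin.lt_def.2 (by omega))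
      ⟨B1, hB1, hla, hz⟩ ⟨B2, hB2, hlb, hw⟩
    refine ⟨K.image (red (k := 1)), mem_image_of_mem _ hK, ?_, ?_⟩
    · have h := mem_image_of_mem (red (k := 1)) hk1
      rwa [red_lift hlav] at h
    · have h := mem_image_of_mem (red (k := 1)) hk2
      rwa [red_lift hlbv] at h

lemma eqv_sig {π : Finset (Finset (Fin (2 * n)))} (hinv : ∀ B ∈ π, B.image sigmaInv ∈ π)
    {i j : Fin (2 * n)} (h : eqv π i j) : eqv π (sigmaInv i) (sigmaInv j) := by
  intro B hB x hx y hy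
  have h' := h _ (hinv B hB) _ (mem_image_of_mem _ hx) _ (mem_image_of_mem _ hy)
  have hi := i.2; have hj := j.2; have hx2 := x.2; have hy2 := y.2
  simp only [Fin.le_def, sig_val] at h' ⊢
  split_ifs at h' ⊢ <;> omega

lemma cls_sig {π : Finset (Finset (Fin (2 * n)))} (hinv : ∀ B ∈ π, B.image sigmaInv ∈ π)
    (i : Fin (2 * n)) : (cls π i).image sigmaInv = cls π (sigmaInv i) := by
  ext y
  simp only [Finset.mem_image, mem_cls]
  constructor
  · rintro ⟨z, hz, rfl⟩
    exact eqv_sig hinv hz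
  · intro hy
    refine ⟨sigmaInv y, ?_, sig_invol y⟩
    have h := eqv_sig hinv hy
    rwa [sig_invol] at h

lemma qhat_inv {π : Finset (Finset (Fin (2 * n)))} (hinv : ∀ B ∈ π, B.image sigmaInv ∈ π) :
    ∀ C ∈ qhat π, C.image sigmaInv ∈ qhat π := by
  intro C hC
  obtain ⟨i, -, rfl⟩ := mem_image.1 hC
  rw [cls_sig hinv]
  exact cls_mem_qhat π (sigmaInv i)

lemma qhat_nc (π : Finset (Finset (Fin (2 * n)))) : IsNonCrossing (qhat π) := by
  rintro a b c d hab hbc hcd ⟨C1, hC1, haC1, hcC1⟩ ⟨C2, hC2, hbC2, hdC2⟩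
  obtain ⟨i, -, rfl⟩ := mem_image.1 hC1
  obtain ⟨j, -, rfl⟩ := mem_image.1 hC2
  have hac := eqv_trans (eqv_symm (mem_cls.1 haC1)) (mem_cls.1 hcC1)
  have hbd := eqv_trans (eqv_symm (mem_cls.1 hbC2)) (mem_cls.1 hdC2)
  have hab' := eqv_cross hab hbc hcd hac hbd
  exact ⟨cls π i, hC1, haC1, mem_cls.2 (eqv_trans (mem_cls.1 haC1) hab')⟩

/-- The converse: if the reduction of `π` is a partition, `π` is `σ`-invariant. -/
lemma inv_of_redPart {P : Finset (Finset (Fin (2 * n)))} (hP : IsPartition P)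
    (hrp : IsPartition (redPart (k := 1) P)) :
    ∀ B ∈ P, B.image sigmaInv ∈ P := by
  have key : ∀ B ∈ P, ∀ x ∈ B, ∀ y ∈ B, ∀ D ∈ P, sigmaInv x ∈ D → sigmaInv y ∈ D := by
    intro B hB x hx y hy D hD hxD
    have hBD : B.image (red (k := 1)) = D.image (red (k := 1)) := by
      refine block_eq hrp (mem_image_of_mem _ hB) (mem_image_of_mem _ hD)
        (mem_image_of_mem _ hx) ?_
      rw [← red_sig x]
      exact mem_image_of_mem _ hxD
    have h1 : red (k := 1) y ∈ D.image (red (k := 1)) := hBD ▸ mem_image_of_mem _ hy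
    obtain ⟨z, hz, hzr⟩ := mem_image.1 h1
    rcases red_eq_cases hzr with hze | hze
    · -- z = y : then D = B, and we chase once more
      rw [hze] at hz
      have hDB : D = B := block_eq hP hD hB hz hy
      have hσx : sigmaInv x ∈ B := hDB ▸ hxD
      obtain ⟨D', ⟨hD', hyD'⟩, -⟩ := hP.2 (sigmaInv y)
      have hBD' : B.image (red (k := 1)) = D'.image (red (k := 1)) := by
        refine block_eq hrp (mem_image_of_mem _ hB) (mem_image_of_mem _ hD')
          (mem_image_of_mem _ hy) ?_
        rw [← red_sig y]
        exact mem_image_of_mem _ hyD'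
      have h2 : red (k := 1) x ∈ D'.image (red (k := 1)) := hBD' ▸ mem_image_of_mem _ hx
      obtain ⟨w, hw, hwr⟩ := mem_image.1 h2
      have hD'B : D' = B := by
        rcases red_eq_cases hwr with hwe | hwe
        · exact block_eq hP hD' hB (hwe ▸ hw) hx
        · exact block_eq hP hD' hB (hwe ▸ hw) hσx
      rw [hDB, ← hD'B]
      exact hyD'
    · exact hze ▸ hz
  intro B hB
  obtain ⟨y0, hy0⟩ := hP.1 B hB
  obtain ⟨D, ⟨hD, hσy0⟩, -⟩ := hP.2 (sigmaInv y0)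
  have him : B.image sigmaInv = D := by
    apply Finset.Subset.antisymm
    · intro e he
      obtain ⟨z, hz, rfl⟩ := mem_image.1 he
      exact key B hB y0 hy0 z hz D hD hσy0
    · intro e he
      have h := key D hD (sigmaInv y0) hσy0 e he B hB (by rw [sig_invol]; exact hy0)
      have h2 : sigmaInv (sigmaInv e) ∈ B.image sigmaInv := mem_image_of_mem _ h
      rwa [sig_invol] at h2
  rw [him]
  exact hD

end Stmt7Aux
/-- **Statement 7.** For `k = 1`, a non-crossing partition `π` of `[2n]` is invariant
under the half-turn involution `σ` (the image of every block is again a block) if and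
only if `π ∈ NC^{(1)}(n)`; i.e. Reiner's type `B` non-crossing partitions coincide
with the non-crossing partitions of type `1`. -/
theorem stmt7 (n : ℕ) (hn : 1 ≤ n)
    (π : Finset (Finset (Fin ((1 + 1) * n))))
    (hpart : IsPartition π) (hnc : IsNonCrossing π) :
    (∀ B ∈ π, B.image (sigmaInv (n := n)) ∈ π) ↔ π ∈ NCk 1 n := by
  constructor
  · intro hinv
    refine ⟨hpart, hnc, Stmt7Aux.redPart_partition hn hpart hinv,
      Stmt7Aux.redPart_nc hn hpart hnc hinv, ?_, ?_⟩
    · rw [Stmt7Aux.kr_eq hnc]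
      exact Stmt7Aux.redPart_partition hn (Stmt7Aux.qhat_partition π) (Stmt7Aux.qhat_inv hinv)
    · rw [Stmt7Aux.kr_eq hnc]
      exact Stmt7Aux.redPart_nc hn (Stmt7Aux.qhat_partition π) (Stmt7Aux.qhat_nc π)
        (Stmt7Aux.qhat_inv hinv)
  · rintro ⟨-, -, h3, -, -, -⟩
    exact Stmt7Aux.inv_of_redPart hpart h3
end

section
/- Fix k ∈ ℕ and n ≥ 1, and let π be a non-crossing partition of [(k+1)n]. Then Red(π ∪ Kr(π)) is a non-crossing partition of [n] ∪ [n̄] (with the order 1 < 1̄ < 2 < 2̄ < ... < n < n̄) if and only if π satisfies the mod n reduction property, i.e. π ∈ NC^{(k)}(n). -/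
open scoped BigOperators
attribute [local instance] Classical.propDecidable

section Helpers

open Finset

variable {m : ℕ}

lemma mem_unbar {B : Finset (Fin m)} {x : Interl m} :
    x ∈ unbar B ↔ (ofLex x).2 = false ∧ (ofLex x).1 ∈ B := by
  constructor
  · intro hx
    rw [unbar, Finset.mem_image] at hx
    obtain ⟨i, hi, rfl⟩ := hx
    exact ⟨rfl, hi⟩
  · rintro ⟨h2, h1⟩
    rw [unbar, Finset.mem_image]
    refine ⟨(ofLex x).1, h1, ?_⟩
    rw [← h2]; rfl

lemma mem_barred {B : Finset (Fin m)} {x : Interl m} :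
    x ∈ barred B ↔ (ofLex x).2 = true ∧ (ofLex x).1 ∈ B := by
  constructor
  · intro hx
    rw [barred, Finset.mem_image] at hx
    obtain ⟨i, hi, rfl⟩ := hx
    exact ⟨rfl, hi⟩
  · rintro ⟨h2, h1⟩
    rw [barred, Finset.mem_image]
    refine ⟨(ofLex x).1, h1, ?_⟩
    rw [← h2]; rfl

lemma unbar_inj {B C : Finset (Fin m)} (h : unbar B = unbar C) : B = C := by
  ext i
  constructor <;> intro hi
  · have : toLex (i, false) ∈ unbar C := h ▸ mem_unbar.2 ⟨rfl, hi⟩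
    exact (mem_unbar.1 this).2
  · have : toLex (i, false) ∈ unbar B := h ▸ mem_unbar.2 ⟨rfl, hi⟩
    exact (mem_unbar.1 this).2

lemma barred_inj {B C : Finset (Fin m)} (h : barred B = barred C) : B = C := by
  ext i
  constructor <;> intro hi
  · have : toLex (i, true) ∈ barred C := h ▸ mem_barred.2 ⟨rfl, hi⟩
    exact (mem_barred.1 this).2
  · have : toLex (i, true) ∈ barred B := h ▸ mem_barred.2 ⟨rfl, hi⟩
    exact (mem_barred.1 this).2

lemma block_cases {p q : Finset (Finset (Fin m))} {D : Finset (Interl m)}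
    (hD : D ∈ unionPart p q) :
    (∃ B ∈ p, D = unbar B) ∨ (∃ B ∈ q, D = barred B) := by
  rw [unionPart, Finset.mem_union, Finset.mem_image, Finset.mem_image] at hD
  rcases hD with ⟨B, hB, rfl⟩ | ⟨B, hB, rfl⟩
  · exact Or.inl ⟨B, hB, rfl⟩
  · exact Or.inr ⟨B, hB, rfl⟩

lemma unbar_mem_unionPart {p q : Finset (Finset (Fin m))} {B : Finset (Fin m)}
    (hB : B ∈ p) : unbar B ∈ unionPart p q :=
  Finset.mem_union_left _ (Finset.mem_image_of_mem _ hB)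

lemma barred_mem_unionPart {p q : Finset (Finset (Fin m))} {B : Finset (Fin m)}
    (hB : B ∈ q) : barred B ∈ unionPart p q :=
  Finset.mem_union_right _ (Finset.mem_image_of_mem _ hB)

lemma isPartition_unionPart {p q : Finset (Finset (Fin m))}
    (hp : IsPartition p) (hq : IsPartition q) : IsPartition (unionPart p q) := by
  constructor
  · intro D hD
    rcases block_cases hD with ⟨B, hB, rfl⟩ | ⟨B, hB, rfl⟩
    · obtain ⟨i, hi⟩ := hp.1 B hB
      exact ⟨toLex (i, false), mem_unbar.2 ⟨rfl, hi⟩⟩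
    · obtain ⟨i, hi⟩ := hq.1 B hB
      exact ⟨toLex (i, true), mem_barred.2 ⟨rfl, hi⟩⟩
  · intro x
    cases hx : (ofLex x).2 with
    | false =>
        obtain ⟨B, ⟨hB, hxB⟩, hBu⟩ := hp.2 (ofLex x).1
        refine ⟨unbar B, ⟨unbar_mem_unionPart hB, mem_unbar.2 ⟨hx, hxB⟩⟩, ?_⟩
        rintro D ⟨hD, hxD⟩
        rcases block_cases hD with ⟨C, hC, rfl⟩ | ⟨C, hC, rfl⟩
        · rw [hBu C ⟨hC, (mem_unbar.1 hxD).2⟩]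
        · rw [(mem_barred.1 hxD).1] at hx; exact absurd hx (by simp)
    | true =>
        obtain ⟨B, ⟨hB, hxB⟩, hBu⟩ := hq.2 (ofLex x).1
        refine ⟨barred B, ⟨barred_mem_unionPart hB, mem_barred.2 ⟨hx, hxB⟩⟩, ?_⟩
        rintro D ⟨hD, hxD⟩
        rcases block_cases hD with ⟨C, hC, rfl⟩ | ⟨C, hC, rfl⟩
        · rw [(mem_unbar.1 hxD).1] at hx; exact absurd hx (by simp)
        · rw [hBu C ⟨hC, (mem_barred.1 hxD).2⟩]

lemma isPartition_unionPart_left {p q : Finset (Finset (Fin m))}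
    (h : IsPartition (unionPart p q)) : IsPartition p := by
  constructor
  · intro B hB
    obtain ⟨x, hx⟩ := h.1 _ (unbar_mem_unionPart (q := q) hB)
    exact ⟨(ofLex x).1, (mem_unbar.1 hx).2⟩
  · intro i
    obtain ⟨D, ⟨hD, hxD⟩, hDu⟩ := h.2 (toLex (i, false))
    rcases block_cases hD with ⟨B, hB, rfl⟩ | ⟨B, hB, rfl⟩
    · refine ⟨B, ⟨hB, (mem_unbar.1 hxD).2⟩, ?_⟩
      intro C ⟨hC, hiC⟩
      exact unbar_inj (hDu (unbar C) ⟨unbar_mem_unionPart hC, mem_unbar.2 ⟨rfl, hiC⟩⟩).symm |>.symm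
    · exact absurd (mem_barred.1 hxD).1 (by simp)

lemma isPartition_unionPart_right {p q : Finset (Finset (Fin m))}
    (h : IsPartition (unionPart p q)) : IsPartition q := by
  constructor
  · intro B hB
    obtain ⟨x, hx⟩ := h.1 _ (barred_mem_unionPart (p := p) hB)
    exact ⟨(ofLex x).1, (mem_barred.1 hx).2⟩
  · intro i
    obtain ⟨D, ⟨hD, hxD⟩, hDu⟩ := h.2 (toLex (i, true))
    rcases block_cases hD with ⟨B, hB, rfl⟩ | ⟨B, hB, rfl⟩
    · exact absurd (mem_unbar.1 hxD).1 (by simp)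
    · refine ⟨B, ⟨hB, (mem_barred.1 hxD).2⟩, ?_⟩
      intro C ⟨hC, hiC⟩
      exact barred_inj (hDu (barred C) ⟨barred_mem_unionPart hC, mem_barred.2 ⟨rfl, hiC⟩⟩).symm |>.symm

end Helpers
section Helpers2

open Finset

variable {m : ℕ}

lemma interl_lt_iff {x y : Interl m} :
    x < y ↔ (ofLex x).1 < (ofLex y).1 ∨ ((ofLex x).1 = (ofLex y).1 ∧ (ofLex x).2 < (ofLex y).2) :=
  Prod.Lex.lt_iff

lemma unbar_lt_unbar {i j : Fin m} : (toLex (i, false) : Interl m) < toLex (j, false) ↔ i < j := by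
  rw [Prod.Lex.lt_iff]; simp

lemma barred_lt_barred {i j : Fin m} : (toLex (i, true) : Interl m) < toLex (j, true) ↔ i < j := by
  rw [Prod.Lex.lt_iff]; simp

lemma nc_unionPart_left {p q : Finset (Finset (Fin m))}
    (h : IsNonCrossing (unionPart p q)) : IsNonCrossing p := by
  intro a b c d hab hbc hcd ⟨B1, hB1, haB1, hcB1⟩ ⟨B2, hB2, hbB2, hdB2⟩
  obtain ⟨W, hW, haW, hbW⟩ := h (toLex (a, false)) (toLex (b, false)) (toLex (c, false))
    (toLex (d, false)) (unbar_lt_unbar.2 hab) (unbar_lt_unbar.2 hbc) (unbar_lt_unbar.2 hcd)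
    ⟨unbar B1, unbar_mem_unionPart hB1, mem_unbar.2 ⟨rfl, haB1⟩, mem_unbar.2 ⟨rfl, hcB1⟩⟩
    ⟨unbar B2, unbar_mem_unionPart hB2, mem_unbar.2 ⟨rfl, hbB2⟩, mem_unbar.2 ⟨rfl, hdB2⟩⟩
  rcases block_cases hW with ⟨B, hB, rfl⟩ | ⟨B, hB, rfl⟩
  · exact ⟨B, hB, (mem_unbar.1 haW).2, (mem_unbar.1 hbW).2⟩
  · exact absurd (mem_barred.1 haW).1 (by simp)

lemma nc_unionPart_right {p q : Finset (Finset (Fin m))}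
    (h : IsNonCrossing (unionPart p q)) : IsNonCrossing q := by
  intro a b c d hab hbc hcd ⟨B1, hB1, haB1, hcB1⟩ ⟨B2, hB2, hbB2, hdB2⟩
  obtain ⟨W, hW, haW, hbW⟩ := h (toLex (a, true)) (toLex (b, true)) (toLex (c, true))
    (toLex (d, true)) (barred_lt_barred.2 hab) (barred_lt_barred.2 hbc) (barred_lt_barred.2 hcd)
    ⟨barred B1, barred_mem_unionPart hB1, mem_barred.2 ⟨rfl, haB1⟩, mem_barred.2 ⟨rfl, hcB1⟩⟩
    ⟨barred B2, barred_mem_unionPart hB2, mem_barred.2 ⟨rfl, hbB2⟩, mem_barred.2 ⟨rfl, hdB2⟩⟩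
  rcases block_cases hW with ⟨B, hB, rfl⟩ | ⟨B, hB, rfl⟩
  · exact absurd (mem_unbar.1 haW).1 (by simp)
  · exact ⟨B, hB, (mem_barred.1 haW).2, (mem_barred.1 hbW).2⟩

lemma red_union {k n : ℕ} (p q : Finset (Finset (Fin ((k + 1) * n)))) :
    ((unionPart p q).image fun V => V.image redInterl)
      = unionPart (redPart p) (redPart q) := by
  rw [unionPart, Finset.image_union, unionPart, redPart, redPart,
    Finset.image_image, Finset.image_image, Finset.image_image, Finset.image_image]
  congr 1
  · apply Finset.image_congr
    intro B _
    show (unbar B).image redInterl = unbar (B.image red)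
    rw [unbar, unbar, Finset.image_image, Finset.image_image]
    rfl
  · apply Finset.image_congr
    intro B _
    show (barred B).image redInterl = barred (B.image red)
    rw [barred, barred, Finset.image_image, Finset.image_image]
    rfl

lemma same_block {X : Type*} {σ : Finset (Finset X)} (h : IsPartition σ)
    {B C : Finset X} {x : X} (hB : B ∈ σ) (hC : C ∈ σ) (hxB : x ∈ B) (hxC : x ∈ C) :
    B = C := by
  obtain ⟨D, -, hD⟩ := h.2 x
  rw [hD B ⟨hB, hxB⟩, hD C ⟨hC, hxC⟩]

end Helpers2
section Core

open Finset

variable {Z : Type*} [LinearOrder Z]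

/-- Number of elements of `U` lying between some pair of elements of `D ∩ U`. -/
noncomputable def spanCard (U D : Finset Z) : ℕ :=
  (U.filter fun z => (∃ x ∈ D, x ∈ U ∧ x ≤ z) ∧ (∃ y ∈ D, y ∈ U ∧ z ≤ y)).card

lemma core_inner {σ : Finset (Finset Z)} (hpart : IsPartition σ) (hnc : IsNonCrossing σ)
    (U : Finset Z) {D : Finset Z} (hD : D ∈ σ)
    (hmin : ∀ E ∈ σ, (∃ x ∈ E, x ∈ U) → spanCard U D ≤ spanCard U E)
    {u v w : Z} (hu : u ∈ D) (hv : v ∈ D) (huU : u ∈ U) (hvU : v ∈ U) (hwU : w ∈ U)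
    (hwD : w ∉ D) (h1 : u < w) (h2 : w < v) : False := by
  obtain ⟨E, ⟨hEσ, hwE⟩, -⟩ := hpart.2 w
  have key : ∀ z ∈ E, z ∈ U → u < z ∧ z < v := by
    intro z hzE hzU
    have hzD : z ∉ D := by
      intro hzD
      exact hwD ((same_block hpart hEσ hD hzE hzD) ▸ hwE)
    rcases lt_trichotomy z u with hzu | rfl | hzu
    · exfalso
      obtain ⟨B, hBσ, hzB, huB⟩ := hnc z u w v hzu h1 h2 ⟨E, hEσ, hzE, hwE⟩ ⟨D, hD, hu, hv⟩
      exact hzD ((same_block hpart hBσ hD huB hu) ▸ hzB)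
    · exact absurd hu hzD
    · rcases lt_trichotomy z v with hzv | rfl | hzv
      · exact ⟨hzu, hzv⟩
      · exact absurd hv hzD
      · exfalso
        obtain ⟨B, hBσ, huB, hwB⟩ := hnc u w v z h1 h2 hzv ⟨D, hD, hu, hv⟩ ⟨E, hEσ, hwE, hzE⟩
        exact hwD ((same_block hpart hBσ hD huB hu) ▸ hwB)
  have hsub : (U.filter fun z => (∃ x ∈ E, x ∈ U ∧ x ≤ z) ∧ (∃ y ∈ E, y ∈ U ∧ z ≤ y))
      ⊂ (U.filter fun z => (∃ x ∈ D, x ∈ U ∧ x ≤ z) ∧ (∃ y ∈ D, y ∈ U ∧ z ≤ y)) := by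
    constructor
    · intro z hz
      rw [Finset.mem_filter] at hz ⊢
      obtain ⟨hzU, ⟨x, hxE, hxU, hxz⟩, ⟨y, hyE, hyU, hzy⟩⟩ := hz
      have hx := key x hxE hxU
      have hy := key y hyE hyU
      exact ⟨hzU, ⟨u, hu, huU, le_of_lt (lt_of_lt_of_le hx.1 hxz)⟩,
        ⟨v, hv, hvU, le_of_lt (lt_of_le_of_lt hzy hy.2)⟩⟩
    · intro hcontra
      have huMem : u ∈ (U.filter fun z => (∃ x ∈ D, x ∈ U ∧ x ≤ z) ∧ (∃ y ∈ D, y ∈ U ∧ z ≤ y)) :=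
        Finset.mem_filter.2 ⟨huU, ⟨u, hu, huU, le_refl u⟩, ⟨u, hu, huU, le_refl u⟩⟩
      have := hcontra huMem
      rw [Finset.mem_filter] at this
      obtain ⟨-, ⟨x, hxE, hxU, hxu⟩, -⟩ := this
      exact absurd hxu (not_le.2 (key x hxE hxU).1)
  have hlt : spanCard U E < spanCard U D := Finset.card_lt_card hsub
  exact absurd (hmin E hEσ ⟨w, hwE, hwU⟩) (not_le.2 hlt)

lemma core {σ : Finset (Finset Z)} (hpart : IsPartition σ) (hnc : IsNonCrossing σ)
    (S T : Finset Z)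
    (hdisj : ∀ D ∈ σ, ∀ x ∈ D, x ∈ S → ∀ y ∈ D, y ∈ T → False)
    (hStwo : ∀ D ∈ σ, ∀ x ∈ D, x ∈ S →
      ∃ u v w, u ∈ D ∧ v ∈ D ∧ u ∈ S ∧ v ∈ S ∧ w ∈ T ∧ u < w ∧ w < v)
    (hTtwo : ∀ D ∈ σ, ∀ x ∈ D, x ∈ T →
      ∃ u v w, u ∈ D ∧ v ∈ D ∧ u ∈ T ∧ v ∈ T ∧ w ∈ S ∧ u < w ∧ w < v)
    (hSne : S.Nonempty) : False := by
  classical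
  set U := S ∪ T with hU
  obtain ⟨s0, hs0⟩ := hSne
  obtain ⟨B0, ⟨hB0σ, hs0B0⟩, -⟩ := hpart.2 s0
  have hFne : (σ.filter fun D => ∃ x ∈ D, x ∈ U).Nonempty :=
    ⟨B0, Finset.mem_filter.2 ⟨hB0σ, s0, hs0B0, Finset.mem_union_left _ hs0⟩⟩
  obtain ⟨D, hDF, hminF⟩ := Finset.exists_min_image _ (spanCard U) hFne
  rw [Finset.mem_filter] at hDF
  obtain ⟨hDσ, x0, hx0D, hx0U⟩ := hDF
  have hmin : ∀ E ∈ σ, (∃ x ∈ E, x ∈ U) → spanCard U D ≤ spanCard U E := by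
    intro E hEσ hEU
    exact hminF E (Finset.mem_filter.2 ⟨hEσ, hEU⟩)
  rcases Finset.mem_union.1 hx0U with hx0S | hx0T
  · obtain ⟨u, v, w, huD, hvD, huS, hvS, hwT, h1, h2⟩ := hStwo D hDσ x0 hx0D hx0S
    have hwD : w ∉ D := fun hwD => hdisj D hDσ u huD huS w hwD hwT
    exact core_inner hpart hnc U hDσ hmin huD hvD (Finset.mem_union_left _ huS)
      (Finset.mem_union_left _ hvS) (Finset.mem_union_right _ hwT) hwD h1 h2
  · obtain ⟨u, v, w, huD, hvD, huT, hvT, hwS, h1, h2⟩ := hTtwo D hDσ x0 hx0D hx0T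
    have hwD : w ∉ D := fun hwD => hdisj D hDσ w hwD hwS u huD huT
    exact core_inner hpart hnc U hDσ hmin huD hvD (Finset.mem_union_right _ huT)
      (Finset.mem_union_right _ hvT) (Finset.mem_union_left _ hwS) hwD h1 h2

end Core
section NatLemmas

lemma myMod {n j t : ℕ} (h : t < n) : (n*j + t) % n = t := by
  rw [add_comm]; simp [Nat.add_mul_mod_self_left, Nat.mod_eq_of_lt h]

lemma myDecomp {n a r : ℕ} (h : a % n = r) : a = n*(a/n) + r := by
  conv_lhs => rw [← Nat.div_add_mod a n]
  rw [h]

lemma win_lt {n j j' r r' : ℕ} (hr : r < n) (hj : j < j') : n*j + r < n*j' + r' := by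
  have h1 : n*(j+1) ≤ n*j' := Nat.mul_le_mul_left n hj
  have h2 : n*(j+1) = n*j + n := by ring
  linarith

lemma win_le {n j j' r r' : ℕ} (hr : r < n) (hr' : r' < n)
    (h : n*j + r < n*j' + r') : j ≤ j' := by
  by_contra hc
  push_neg at hc
  exact absurd h (not_lt.2 (le_of_lt (win_lt hr' hc)))

lemma win_lt_idx {n j j' r r' : ℕ} (hr : r < n) (hr' : r' < n)
    (h : n*j + r < n*j' + r') (hrr : r' ≤ r) : j < j' := by
  rcases lt_or_ge j j' with h' | h'
  · exact h'
  · exfalso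
    have : n*j' ≤ n*j := Nat.mul_le_mul_left n h'
    linarith

lemma succ_mul_le {n j j' : ℕ} (hj : j < j') : n*j + n ≤ n*j' := by
  have := Nat.mul_le_mul_left n (Nat.succ_le_of_lt hj)
  rwa [Nat.mul_succ] at this

lemma natRed {n x b : ℕ} (hn : 0 < n) (hb : b < 2) : (2*x + b) % (2*n) = 2*(x % n) + b := by
  have h1 : x = n*(x/n) + x % n := myDecomp rfl
  have h2 : 2*x + b = (2*n)*(x/n) + (2*(x % n) + b) := by
    conv_lhs => rw [h1]
    ring
  have h3 : x % n < n := Nat.mod_lt _ hn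
  rw [h2, myMod (by omega)]

lemma natS {N u v ra rb rc rd : ℕ} (h1 : ra < rb) (h2 : rb < rc) (h3 : rc < rd) (h4 : rd < N)
    (hu : u % N = ra) (hv : v % N = rc) (hne : u ≠ v) :
    ∃ w, (w % N = rb ∨ w % N = rd) ∧ min u v < w ∧ w < max u v := by
  have hu' := myDecomp hu
  have hv' := myDecomp hv
  rcases lt_or_gt_of_ne hne with huv | huv
  · have huv' : N*(u/N) + ra < N*(v/N) + rc := by rw [← hu', ← hv']; exact huv
    have hj : u/N ≤ v/N := win_le (by omega) (by omega) huv'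
    have hmul : N*(u/N) ≤ N*(v/N) := Nat.mul_le_mul_left N hj
    refine ⟨N*(u/N) + rb, Or.inl (myMod (by omega)), ?_, ?_⟩
    · rw [min_eq_left (le_of_lt huv)]; linarith
    · rw [max_eq_right (le_of_lt huv)]; linarith
  · have huv' : N*(v/N) + rc < N*(u/N) + ra := by rw [← hu', ← hv']; exact huv
    have hj : v/N < u/N := win_lt_idx (by omega) (by omega) huv' (by omega)
    have hmul := succ_mul_le (n := N) hj
    refine ⟨N*(v/N) + rd, Or.inr (myMod h4), ?_, ?_⟩
    · rw [min_eq_right (le_of_lt huv)]; linarith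
    · rw [max_eq_left (le_of_lt huv)]; linarith

lemma natT {N u v ra rb rc rd : ℕ} (h1 : ra < rb) (h2 : rb < rc) (h3 : rc < rd) (h4 : rd < N)
    (hu : u % N = rb) (hv : v % N = rd) (hne : u ≠ v) :
    ∃ w, (w % N = ra ∨ w % N = rc) ∧ min u v < w ∧ w < max u v := by
  have hu' := myDecomp hu
  have hv' := myDecomp hv
  rcases lt_or_gt_of_ne hne with huv | huv
  · have huv' : N*(u/N) + rb < N*(v/N) + rd := by rw [← hu', ← hv']; exact huv
    have hj : u/N ≤ v/N := win_le (by omega) (by omega) huv'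
    have hmul : N*(u/N) ≤ N*(v/N) := Nat.mul_le_mul_left N hj
    refine ⟨N*(u/N) + rc, Or.inr (myMod (by omega)), ?_, ?_⟩
    · rw [min_eq_left (le_of_lt huv)]; linarith
    · rw [max_eq_right (le_of_lt huv)]; linarith
  · have huv' : N*(v/N) + rd < N*(u/N) + rb := by rw [← hu', ← hv']; exact huv
    have hj : v/N < u/N := win_lt_idx (by omega) (by omega) huv' (by omega)
    have hmul := succ_mul_le (n := N) hj
    refine ⟨N*(v/N) + N + ra, Or.inl ?_, ?_, ?_⟩
    · rw [show N*(v/N) + N + ra = N*(v/N + 1) + ra by ring]; exact myMod (by omega)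
    · rw [min_eq_right (le_of_lt huv)]; linarith
    · rw [max_eq_left (le_of_lt huv)]; linarith

end NatLemmas

section EIdx

/-- Encoding of the interleaved set into `[0, 2m)`. -/
def eIdx {m : ℕ} (z : Interl m) : ℕ :=
  2 * (ofLex z).1.1 + (ofLex z).2.toNat

lemma eIdx_lt_iff {m : ℕ} {z z' : Interl m} : z < z' ↔ eIdx z < eIdx z' := by
  rw [interl_lt_iff]
  have hb : ∀ (x y : Bool), (x < y) ↔ (x.toNat < y.toNat) := by decide
  rw [hb, Fin.lt_def, Fin.ext_iff]
  unfold eIdx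
  have h1 : (ofLex z).2.toNat ≤ 1 := Bool.toNat_le _
  have h2 : (ofLex z').2.toNat ≤ 1 := Bool.toNat_le _
  omega

lemma eIdx_inj {m : ℕ} {z z' : Interl m} (h : eIdx z = eIdx z') : z = z' := by
  rcases lt_trichotomy z z' with hlt | he | hlt
  · exact absurd (eIdx_lt_iff.1 hlt) (by omega)
  · exact he
  · exact absurd (eIdx_lt_iff.1 hlt) (by omega)

lemma eIdx_bound {m : ℕ} (z : Interl m) : eIdx z < 2*m := by
  have h1 := (ofLex z).1.2
  have h2 : (ofLex z).2.toNat ≤ 1 := Bool.toNat_le _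
  unfold eIdx
  omega

lemma eIdx_surj {m : ℕ} {w1 : ℕ} (h : w1 < 2*m) : ∃ z : Interl m, eIdx z = w1 := by
  refine ⟨toLex (⟨w1/2, by omega⟩, w1 % 2 == 1), ?_⟩
  show 2 * (w1/2) + (w1 % 2 == 1).toNat = w1
  rcases Nat.mod_two_eq_zero_or_one w1 with h2 | h2 <;> rw [h2] <;> simp <;> omega

lemma eIdx_red {k n : ℕ} (hn : 0 < n) (z : Interl ((k+1)*n)) :
    eIdx (redInterl z) = eIdx z % (2*n) := by
  have hb : (ofLex z).2.toNat < 2 := by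
    have := Bool.toNat_le (ofLex z).2; omega
  show 2 * ((ofLex z).1.1 % n) + (ofLex z).2.toNat
      = (2 * (ofLex z).1.1 + (ofLex z).2.toNat) % (2*n)
  rw [natRed hn hb]

end EIdx
section Mixed

open Finset

lemma rep_exists {k n : ℕ} {σ : Finset (Finset (Interl ((k+1)*n)))}
    (hred : IsPartition (σ.image fun V => V.image redInterl))
    {D : Finset (Interl ((k+1)*n))} (hD : D ∈ σ) {x : Interl ((k+1)*n)} (hxD : x ∈ D)
    {BR : Finset (Interl n)} (hBR : BR ∈ σ.image fun V => V.image redInterl)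
    (hx : redInterl x ∈ BR) {p : Interl n} (hp : p ∈ BR) :
    ∃ u ∈ D, redInterl u = p := by
  have hDR : D.image redInterl ∈ σ.image (fun V => V.image redInterl) :=
    Finset.mem_image_of_mem _ hD
  have heq : D.image redInterl = BR :=
    same_block hred hDR hBR (Finset.mem_image_of_mem _ hxD) hx
  rw [← heq] at hp
  obtain ⟨u, hu, hu'⟩ := Finset.mem_image.1 hp
  exact ⟨u, hu, hu'⟩

lemma flag_redInterl {k n : ℕ} (z : Interl ((k+1)*n)) :
    (ofLex (redInterl z)).2 = (ofLex z).2 := rfl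

lemma no_mixed {k n : ℕ} {σ : Finset (Finset (Interl ((k+1)*n)))}
    (hσ : IsPartition σ) (hnc : IsNonCrossing σ)
    (hpure : ∀ D ∈ σ, ∀ x ∈ D, ∀ y ∈ D, (ofLex x).2 = (ofLex y).2)
    (hred : IsPartition (σ.image fun V => V.image redInterl))
    {a b c d : Interl n} (hab : a < b) (hbc : b < c) (hcd : c < d)
    (hfab : (ofLex a).2 ≠ (ofLex b).2) (hfac : (ofLex a).2 = (ofLex c).2)
    (hfbd : (ofLex b).2 = (ofLex d).2)
    {BR CR : Finset (Interl n)}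
    (hBR : BR ∈ σ.image fun V => V.image redInterl)
    (hCR : CR ∈ σ.image fun V => V.image redInterl)
    (haBR : a ∈ BR) (hcBR : c ∈ BR) (hbCR : b ∈ CR) (hdCR : d ∈ CR) : False := by
  classical
  have hn : 0 < n := lt_of_le_of_lt (Nat.zero_le _) (ofLex a).1.2
  have h1 : eIdx a < eIdx b := eIdx_lt_iff.1 hab
  have h2 : eIdx b < eIdx c := eIdx_lt_iff.1 hbc
  have h3 : eIdx c < eIdx d := eIdx_lt_iff.1 hcd
  have h4 : eIdx d < 2*n := eIdx_bound d
  have hM : 2*n ≤ 2*((k+1)*n) := by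
    have : n ≤ (k+1)*n := Nat.le_mul_of_pos_left n (Nat.succ_pos k)
    omega
  set S : Finset (Interl ((k+1)*n)) :=
    Finset.univ.filter (fun z => redInterl z = a ∨ redInterl z = c) with hS
  set T : Finset (Interl ((k+1)*n)) :=
    Finset.univ.filter (fun z => redInterl z = b ∨ redInterl z = d) with hT
  have hmemS : ∀ z, z ∈ S ↔ (redInterl z = a ∨ redInterl z = c) := by
    intro z; rw [hS, Finset.mem_filter]; simp
  have hmemT : ∀ z, z ∈ T ↔ (redInterl z = b ∨ redInterl z = d) := by
    intro z; rw [hT, Finset.mem_filter]; simp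
  have hflagS : ∀ z, z ∈ S → (ofLex z).2 = (ofLex a).2 := by
    intro z hz
    rcases (hmemS z).1 hz with h | h
    · rw [← flag_redInterl z, h]
    · rw [← flag_redInterl z, h, hfac]
  have hflagT : ∀ z, z ∈ T → (ofLex z).2 = (ofLex b).2 := by
    intro z hz
    rcases (hmemT z).1 hz with h | h
    · rw [← flag_redInterl z, h]
    · rw [← flag_redInterl z, h, hfbd]
  refine core hσ hnc S T ?_ ?_ ?_ ?_
  · -- hdisj
    intro D hD x hxD hxS y hyD hyT
    exact hfab ((hflagS x hxS).symm.trans ((hpure D hD x hxD y hyD).trans (hflagT y hyT)))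
  · -- hStwo
    intro D hD x hxD hxS
    have hxBR : redInterl x ∈ BR := by
      rcases (hmemS x).1 hxS with h | h <;> rw [h] <;> assumption
    obtain ⟨u, huD, hua⟩ := rep_exists hred hD hxD hBR hxBR haBR
    obtain ⟨v, hvD, hvc⟩ := rep_exists hred hD hxD hBR hxBR hcBR
    have hu' : eIdx u % (2*n) = eIdx a := by rw [← eIdx_red hn u, hua]
    have hv' : eIdx v % (2*n) = eIdx c := by rw [← eIdx_red hn v, hvc]
    have hac : a ≠ c := ne_of_lt (lt_trans hab hbc)
    have hneq : eIdx u ≠ eIdx v := by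
      intro h
      rw [eIdx_inj h] at hua
      exact hac (hua.symm.trans hvc)
    obtain ⟨w1, hw1mod, hw1min, hw1max⟩ := natS h1 h2 h3 h4 hu' hv' hneq
    have hwlt : w1 < 2*((k+1)*n) :=
      lt_trans hw1max (max_lt (eIdx_bound u) (eIdx_bound v))
    obtain ⟨w, hw⟩ := eIdx_surj hwlt
    have hwT : w ∈ T := by
      rw [hmemT w]
      rcases hw1mod with h | h
      · exact Or.inl (eIdx_inj (by rw [eIdx_red hn w, hw, h]))
      · exact Or.inr (eIdx_inj (by rw [eIdx_red hn w, hw, h]))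
    have huS : u ∈ S := (hmemS u).2 (Or.inl hua)
    have hvS : v ∈ S := (hmemS v).2 (Or.inr hvc)
    rcases lt_or_gt_of_ne hneq with ho | ho
    · rw [min_eq_left (le_of_lt ho)] at hw1min
      rw [max_eq_right (le_of_lt ho)] at hw1max
      exact ⟨u, v, w, huD, hvD, huS, hvS, hwT,
        eIdx_lt_iff.2 (by rw [hw]; exact hw1min), eIdx_lt_iff.2 (by rw [hw]; exact hw1max)⟩
    · rw [min_eq_right (le_of_lt ho)] at hw1min
      rw [max_eq_left (le_of_lt ho)] at hw1max
      exact ⟨v, u, w, hvD, huD, hvS, huS, hwT,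
        eIdx_lt_iff.2 (by rw [hw]; exact hw1min), eIdx_lt_iff.2 (by rw [hw]; exact hw1max)⟩
  · -- hTtwo
    intro D hD x hxD hxT
    have hxCR : redInterl x ∈ CR := by
      rcases (hmemT x).1 hxT with h | h <;> rw [h] <;> assumption
    obtain ⟨u, huD, hub⟩ := rep_exists hred hD hxD hCR hxCR hbCR
    obtain ⟨v, hvD, hvd⟩ := rep_exists hred hD hxD hCR hxCR hdCR
    have hu' : eIdx u % (2*n) = eIdx b := by rw [← eIdx_red hn u, hub]
    have hv' : eIdx v % (2*n) = eIdx d := by rw [← eIdx_red hn v, hvd]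
    have hbd : b ≠ d := ne_of_lt (lt_trans hbc hcd)
    have hneq : eIdx u ≠ eIdx v := by
      intro h
      rw [eIdx_inj h] at hub
      exact hbd (hub.symm.trans hvd)
    obtain ⟨w1, hw1mod, hw1min, hw1max⟩ := natT h1 h2 h3 h4 hu' hv' hneq
    have hwlt : w1 < 2*((k+1)*n) :=
      lt_trans hw1max (max_lt (eIdx_bound u) (eIdx_bound v))
    obtain ⟨w, hw⟩ := eIdx_surj hwlt
    have hwS : w ∈ S := by
      rw [hmemS w]
      rcases hw1mod with h | h
      · exact Or.inl (eIdx_inj (by rw [eIdx_red hn w, hw, h]))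
      · exact Or.inr (eIdx_inj (by rw [eIdx_red hn w, hw, h]))
    have huT : u ∈ T := (hmemT u).2 (Or.inl hub)
    have hvT : v ∈ T := (hmemT v).2 (Or.inr hvd)
    rcases lt_or_gt_of_ne hneq with ho | ho
    · rw [min_eq_left (le_of_lt ho)] at hw1min
      rw [max_eq_right (le_of_lt ho)] at hw1max
      exact ⟨u, v, w, huD, hvD, huT, hvT, hwS,
        eIdx_lt_iff.2 (by rw [hw]; exact hw1min), eIdx_lt_iff.2 (by rw [hw]; exact hw1max)⟩
    · rw [min_eq_right (le_of_lt ho)] at hw1min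
      rw [max_eq_left (le_of_lt ho)] at hw1max
      exact ⟨v, u, w, hvD, huD, hvT, huT, hwS,
        eIdx_lt_iff.2 (by rw [hw]; exact hw1min), eIdx_lt_iff.2 (by rw [hw]; exact hw1max)⟩
  · -- S nonempty
    obtain ⟨z, hz⟩ := eIdx_surj (lt_of_lt_of_le (lt_trans (lt_trans h1 h2) (lt_trans h3 h4)) hM)
    refine ⟨z, (hmemS z).2 (Or.inl (eIdx_inj ?_))⟩
    rw [eIdx_red hn z, hz, Nat.mod_eq_of_lt (lt_trans (lt_trans h1 h2) (lt_trans h3 h4))]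

end Mixed
section Main

open Finset

lemma lt_proj_same_flag {m : ℕ} {x y : Interl m} (h : x < y)
    (hf : (ofLex x).2 = (ofLex y).2) : (ofLex x).1 < (ofLex y).1 := by
  rcases interl_lt_iff.1 h with h' | ⟨-, h'⟩
  · exact h'
  · rw [hf] at h'
    exact absurd h' (lt_irrefl _)

end Main
/-- **Statement 8.** For a non-crossing partition `π` of `[(k+1)n]`, the reduction
`Red(π ∪ Kr(π))` is a non-crossing partition of `[n] ∪ [n̄]` (with the interleaved
order) if and only if `π` satisfies the mod `n` reduction property, i.e. `π ∈ NC^{(k)}(n)`. -/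
theorem stmt8 (k n : ℕ) (hn : 1 ≤ n)
    (π : Finset (Finset (Fin ((k + 1) * n))))
    (hpart : IsPartition π) (hnc : IsNonCrossing π) :
    (IsPartition ((unionPart π (kr π)).image fun V => V.image redInterl) ∧
      IsNonCrossing ((unionPart π (kr π)).image fun V => V.image redInterl))
    ↔ π ∈ NCk k n := by
  have hreq := red_union π (kr π)
  rw [hreq]
  constructor
  · rintro ⟨h1, h2⟩
    exact ⟨hpart, hnc, isPartition_unionPart_left h1, nc_unionPart_left h2,
      isPartition_unionPart_right h1, nc_unionPart_right h2⟩
  · rintro ⟨-, -, hP, hPnc, hQ, hQnc⟩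
    have hex : ∃ q, IsKr π q := by
      by_contra hne
      have hk0 : kr π = ∅ := by unfold kr; exact dif_neg hne
      rw [hk0] at hQ
      have he : redPart (∅ : Finset (Finset (Fin ((k+1)*n)))) = ∅ := by simp [redPart]
      rw [he] at hQ
      obtain ⟨B, ⟨hB, -⟩, -⟩ := hQ.2 ⟨0, hn⟩
      exact absurd hB (Finset.notMem_empty B)
    have hkr : IsKr π (kr π) := by
      have h : kr π = hex.choose := by unfold kr; exact dif_pos hex
      rw [h]
      exact hex.choose_spec
    have hKpart : IsPartition (kr π) := hkr.1
    have hUnc : IsNonCrossing (unionPart π (kr π)) := hkr.2.1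
    have hσpart : IsPartition (unionPart π (kr π)) := isPartition_unionPart hpart hKpart
    have hRpart : IsPartition (unionPart (redPart π) (redPart (kr π))) :=
      isPartition_unionPart hP hQ
    refine ⟨hRpart, ?_⟩
    have hpure : ∀ D ∈ unionPart π (kr π), ∀ x ∈ D, ∀ y ∈ D,
        (ofLex x).2 = (ofLex y).2 := by
      intro D hD x hx y hy
      rcases block_cases hD with ⟨B, -, rfl⟩ | ⟨B, -, rfl⟩
      · rw [(mem_unbar.1 hx).1, (mem_unbar.1 hy).1]
      · rw [(mem_barred.1 hx).1, (mem_barred.1 hy).1]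
    have hred2 : IsPartition ((unionPart π (kr π)).image fun V => V.image redInterl) := by
      rw [hreq]; exact hRpart
    intro a b c d hab hbc hcd hac hbd
    obtain ⟨B1, hB1, haB1, hcB1⟩ := hac
    obtain ⟨B2, hB2, hbB2, hdB2⟩ := hbd
    have hB1' : B1 ∈ (unionPart π (kr π)).image (fun V => V.image redInterl) := by
      rw [hreq]; exact hB1
    have hB2' : B2 ∈ (unionPart π (kr π)).image (fun V => V.image redInterl) := by
      rw [hreq]; exact hB2
    rcases block_cases hB1 with ⟨Bp, hBp, rfl⟩ | ⟨Bq, hBq, rfl⟩ <;>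
      rcases block_cases hB2 with ⟨Cp, hCp, rfl⟩ | ⟨Cq, hCq, rfl⟩
    · -- unbar / unbar : use hPnc
      obtain ⟨hfa, haB⟩ := mem_unbar.1 haB1
      obtain ⟨hfc, hcB⟩ := mem_unbar.1 hcB1
      obtain ⟨hfb, hbB⟩ := mem_unbar.1 hbB2
      obtain ⟨hfd, hdB⟩ := mem_unbar.1 hdB2
      obtain ⟨W, hW, h1, h2⟩ := hPnc (ofLex a).1 (ofLex b).1 (ofLex c).1 (ofLex d).1
        (lt_proj_same_flag hab (hfa.trans hfb.symm))
        (lt_proj_same_flag hbc (hfb.trans hfc.symm))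
        (lt_proj_same_flag hcd (hfc.trans hfd.symm))
        ⟨Bp, hBp, haB, hcB⟩ ⟨Cp, hCp, hbB, hdB⟩
      exact ⟨unbar W, unbar_mem_unionPart hW, mem_unbar.2 ⟨hfa, h1⟩, mem_unbar.2 ⟨hfb, h2⟩⟩
    · -- unbar / barred : mixed, impossible
      exact absurd (no_mixed hσpart hUnc hpure hred2 hab hbc hcd
        (by rw [(mem_unbar.1 haB1).1, (mem_barred.1 hbB2).1]; simp)
        ((mem_unbar.1 haB1).1.trans (mem_unbar.1 hcB1).1.symm)
        ((mem_barred.1 hbB2).1.trans (mem_barred.1 hdB2).1.symm)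
        hB1' hB2' haB1 hcB1 hbB2 hdB2) (fun h => h)
    · -- barred / unbar : mixed, impossible
      exact absurd (no_mixed hσpart hUnc hpure hred2 hab hbc hcd
        (by rw [(mem_barred.1 haB1).1, (mem_unbar.1 hbB2).1]; simp)
        ((mem_barred.1 haB1).1.trans (mem_barred.1 hcB1).1.symm)
        ((mem_unbar.1 hbB2).1.trans (mem_unbar.1 hdB2).1.symm)
        hB1' hB2' haB1 hcB1 hbB2 hdB2) (fun h => h)
    · -- barred / barred : use hQnc
      obtain ⟨hfa, haB⟩ := mem_barred.1 haB1
      obtain ⟨hfc, hcB⟩ := mem_barred.1 hcB1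
      obtain ⟨hfb, hbB⟩ := mem_barred.1 hbB2
      obtain ⟨hfd, hdB⟩ := mem_barred.1 hdB2
      obtain ⟨W, hW, h1, h2⟩ := hQnc (ofLex a).1 (ofLex b).1 (ofLex c).1 (ofLex d).1
        (lt_proj_same_flag hab (hfa.trans hfb.symm))
        (lt_proj_same_flag hbc (hfb.trans hfc.symm))
        (lt_proj_same_flag hcd (hfc.trans hfd.symm))
        ⟨Bq, hBq, haB, hcB⟩ ⟨Cq, hCq, hbB, hdB⟩
      exact ⟨barred W, barred_mem_unionPart hW, mem_barred.2 ⟨hfa, h1⟩, mem_barred.2 ⟨hfb, h2⟩⟩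
end
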